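/- arXiv:1510.03896 — 5 statements merged into one kernel-verified Lean document; each statement's English description precedes it below -/
import Mathlib

section
/- Let (A, φ) be a non-commutative probability space, χ : {1,…,n} → {ℓ,r}, and [Z_{k;i,j}] ∈ M_d(A) for 1 ≤ k ≤ n. Set Z_k = L([Z_{k;i,j}]) if χ(k) = ℓ and Z_k = R([Z_{k;i,j}]) if χ(k) = r, where L and R are the left and right matrix multiplication operators on M_d(A). Then E_d(Z₁⋯Z_n) = Σ over all indices i₁,…,i_n, j₁,…,j_n in {1,…,d} of φ(Z_{1;i₁,j₁} ⋯ Z_{n;i_n,j_n}) · E_{i_{s_χ(1)}, j_{s_χ(1)}} ⋯ E_{i_{s_χ(n)}, j_{s_χ(n)}}. -/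
open Matrix

noncomputable section

variable {A : Type} [Ring A] [Algebra ℂ A]

/-- The left matrix-multiplication operator `L([Z])[T] = [Σ_k Z_{i,k} T_{k,j}] = Z * T`. -/
def Lop (d : ℕ) (Z : Matrix (Fin d) (Fin d) A) :
    Module.End ℂ (Matrix (Fin d) (Fin d) A) where
  toFun T := Z * T
  map_add' := by intros; simp [Matrix.mul_add]
  map_smul' := by intros; simp [Matrix.mul_smul]

/-- The right matrix-multiplication operator `R([Z])[T] = [Σ_k Z_{k,j} T_{i,k}]`. -/
def Rop (d : ℕ) (Z : Matrix (Fin d) (Fin d) A) :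
    Module.End ℂ (Matrix (Fin d) (Fin d) A) where
  toFun T := (Zᵀ * Tᵀ)ᵀ
  map_add' := by intros; simp [Matrix.transpose_add, Matrix.mul_add]
  map_smul' := by intros; simp [Matrix.transpose_smul, Matrix.mul_smul]

/-- `E_d(T) = [φ((T(I_d))_{i,j})]`. -/
def Ed (d : ℕ) (φ : A →ₗ[ℂ] ℂ) (T : Module.End ℂ (Matrix (Fin d) (Fin d) A)) :
    Matrix (Fin d) (Fin d) ℂ :=
  (T 1).map fun a => φ a

def sL {n : ℕ} (χ : Fin n → Bool) : List (Fin n) :=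
  ((List.finRange n).filter fun k => χ k) ++
    (((List.finRange n).filter fun k => !χ k).reverse)


lemma map_s_eq {n : ℕ} (χ : Fin n → Bool) (s : Equiv.Perm (Fin n))
    (hs₁ : ∀ i j : Fin n, i < j → χ (s i) = true → χ (s j) = true → s i < s j)
    (hs₂ : ∀ i j : Fin n, i < j → χ (s i) = false → χ (s j) = false → s j < s i)
    (hs₃ : ∀ i j : Fin n, i < j → χ (s i) = false → χ (s j) = false) :
    (List.finRange n).map s = sL χ := by
  classical
  set R : Fin n → Fin n → Prop := fun x y =>
    (χ x = true ∧ χ y = true ∧ x < y) ∨ (χ x = true ∧ χ y = false) ∨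
      (χ x = false ∧ χ y = false ∧ y < x) with hR
  haveI : IsAntisymm (Fin n) R := ⟨by
    rintro x y (⟨hx, hy, h1⟩ | ⟨hx, hy⟩ | ⟨hx, hy, h1⟩)
      (⟨hx', hy', h2⟩ | ⟨hx', hy'⟩ | ⟨hx', hy', h2⟩) <;>
      first
        | exact absurd h2 (lt_asymm h1)
        | simp_all⟩
  refine (fun hp h1 h2 => List.Perm.eq_of_pairwise' (r := R) h1 h2 hp) ?_ ?_ ?_
  · have h1 : List.Perm ((List.finRange n).map s) (List.finRange n) :=
      List.perm_of_nodup_nodup_toFinset_eq ((List.nodup_finRange n).map s.injective)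
        (List.nodup_finRange n) (by
          ext x
          simp only [List.mem_toFinset, List.mem_map, List.mem_finRange, true_and, iff_true]
          exact ⟨s.symm x, by simp⟩)
    have h2 : List.Perm (sL χ) (List.finRange n) :=
      ((List.Perm.refl _).append (List.reverse_perm _)).trans
        (List.filter_append_perm _ _)
    exact h1.trans h2.symm
  · refine List.pairwise_map.mpr ?_
    refine (List.pairwise_lt_finRange n).imp ?_
    intro i j hij
    by_cases hi : χ (s i) = true
    · by_cases hj : χ (s j) = true
      · exact Or.inl ⟨hi, hj, hs₁ i j hij hi hj⟩
      · exact Or.inr (Or.inl ⟨hi, Bool.not_eq_true _ ▸ hj⟩)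
    · have hi' : χ (s i) = false := Bool.not_eq_true _ ▸ hi
      have hj' : χ (s j) = false := hs₃ i j hij hi'
      exact Or.inr (Or.inr ⟨hi', hj', hs₂ i j hij hi' hj'⟩)
  · refine List.pairwise_append.mpr ⟨?_, ?_, ?_⟩
    · refine ((List.pairwise_lt_finRange n).filter _).imp_of_mem ?_
      intro a b ha hb hab
      have ha' := (List.mem_filter.mp ha).2
      have hb' := (List.mem_filter.mp hb).2
      exact Or.inl ⟨by simpa using ha', by simpa using hb', hab⟩
    · rw [List.pairwise_reverse]
      refine ((List.pairwise_lt_finRange n).filter _).imp_of_mem ?_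
      intro a b ha hb hab
      have ha' := (List.mem_filter.mp ha).2
      have hb' := (List.mem_filter.mp hb).2
      exact Or.inr (Or.inr ⟨by simpa using hb', by simpa using ha', hab⟩)
    · intro a ha b hb
      rw [List.mem_reverse] at hb
      have ha' := (List.mem_filter.mp ha).2
      have hb' := (List.mem_filter.mp hb).2
      exact Or.inr (Or.inl ⟨by simpa using ha', by simpa using hb'⟩)

lemma Lop_apply (d : ℕ) (Z T : Matrix (Fin d) (Fin d) A) : Lop d Z T = Z * T := rfl
lemma Rop_apply (d : ℕ) (Z T : Matrix (Fin d) (Fin d) A) : Rop d Z T = (Zᵀ * Tᵀ)ᵀ := rfl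

def Umat {n d : ℕ} (χ : Fin n → Bool) (i j : Fin n → Fin d) : Matrix (Fin d) (Fin d) ℂ :=
  ((sL χ).map fun k => Matrix.single (i k) (j k) (1:ℂ)).prod

def Wprod {n d : ℕ} (Zm : Fin n → Matrix (Fin d) (Fin d) A) (i j : Fin n → Fin d) : A :=
  ((List.finRange n).map fun k => Zm k (i k) (j k)).prod

lemma sL_succ_true {n : ℕ} (χ : Fin (n+1) → Bool) (h : χ 0 = true) :
    sL χ = 0 :: (sL (fun k => χ k.succ)).map Fin.succ := by
  unfold sL
  rw [List.finRange_succ, List.filter_cons, List.filter_cons]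
  simp only [h, List.filter_map, List.map_reverse, Bool.not_true, List.map_append,
    if_true, Bool.false_eq_true, if_false]
  rfl

lemma sL_succ_false {n : ℕ} (χ : Fin (n+1) → Bool) (h : χ 0 = false) :
    sL χ = ((sL (fun k => χ k.succ)).map Fin.succ) ++ [0] := by
  unfold sL
  rw [List.finRange_succ, List.filter_cons, List.filter_cons]
  simp only [h, List.filter_map, List.map_reverse, Bool.not_false, List.map_append,
    List.reverse_cons, List.append_assoc, if_true, Bool.false_eq_true, if_false]
  rfl

lemma unitL {d : ℕ} (x y a b : Fin d) (M : Matrix (Fin d) (Fin d) ℂ) :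
    (Matrix.single x y (1:ℂ) * M) a b = if a = x then M y b else 0 := by
  simp [Matrix.mul_apply, Matrix.single, ite_and, Finset.sum_ite_eq, eq_comm]

lemma unitR {d : ℕ} (x y a b : Fin d) (M : Matrix (Fin d) (Fin d) ℂ) :
    (M * Matrix.single x y (1:ℂ)) a b = if b = y then M a x else 0 := by
  simp only [Matrix.mul_apply, Matrix.single, Matrix.of_apply, mul_ite, mul_one, mul_zero]
  rw [Finset.sum_congr rfl (fun c _ => by rw [ite_and])]
  by_cases hb : b = y
  · simp [hb, Finset.sum_ite_eq']
  · simp [hb, Ne.symm hb, Finset.sum_ite_eq']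

lemma Umat_cons_true {n d : ℕ} (χ : Fin (n+1) → Bool) (h : χ 0 = true) (x y : Fin d)
    (i' j' : Fin n → Fin d) :
    Umat χ (Fin.cons x i') (Fin.cons y j')
      = Matrix.single x y (1:ℂ) * Umat (fun k => χ k.succ) i' j' := by
  unfold Umat
  rw [sL_succ_true χ h, List.map_cons, List.prod_cons, List.map_map]
  simp only [Fin.cons_zero, Function.comp_def, Fin.cons_succ]

lemma Umat_cons_false {n d : ℕ} (χ : Fin (n+1) → Bool) (h : χ 0 = false) (x y : Fin d)
    (i' j' : Fin n → Fin d) :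
    Umat χ (Fin.cons x i') (Fin.cons y j')
      = Umat (fun k => χ k.succ) i' j' * Matrix.single x y (1:ℂ) := by
  unfold Umat
  rw [sL_succ_false χ h, List.map_append, List.prod_append, List.map_map]
  simp only [Fin.cons_zero, Function.comp_def, Fin.cons_succ, List.map_cons, List.map_nil,
    List.prod_cons, List.prod_nil, mul_one]

lemma Wprod_cons {n d : ℕ} (Zm : Fin (n+1) → Matrix (Fin d) (Fin d) A) (x y : Fin d)
    (i' j' : Fin n → Fin d) :
    Wprod Zm (Fin.cons x i') (Fin.cons y j')
      = Zm 0 x y * Wprod (fun k => Zm k.succ) i' j' := by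
  unfold Wprod
  rw [List.finRange_succ, List.map_cons, List.prod_cons, List.map_map]
  simp only [Fin.cons_zero, Function.comp_def, Fin.cons_succ]

lemma sum_cons_split {d n : ℕ} {M : Type} [AddCommMonoid M] (g : (Fin (n+1) → Fin d) → M) :
    ∑ i, g i = ∑ x : Fin d, ∑ i' : Fin n → Fin d, g (Fin.cons x i') := by
  rw [← (Fin.consEquiv fun _ => Fin d).sum_comp g, Fintype.sum_prod_type]
  rfl

lemma key (d : ℕ) : ∀ (n : ℕ) (χ : Fin n → Bool) (Zm : Fin n → Matrix (Fin d) (Fin d) A)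
    (a b : Fin d),
    (((List.finRange n).map fun k => if χ k then Lop d (Zm k) else Rop d (Zm k)).prod 1) a b
      = ∑ i : Fin n → Fin d, ∑ j : Fin n → Fin d, Umat χ i j a b • Wprod Zm i j := by
  intro n
  induction n with
  | zero =>
    intro χ Zm a b
    simp [Umat, Wprod, sL, Matrix.one_apply]
  | succ n IH =>
    intro χ Zm a b
    have hop : (((List.finRange (n+1)).map fun k =>
          if χ k then Lop d (Zm k) else Rop d (Zm k)).prod 1) a b
        = ((if χ 0 then Lop d (Zm 0) else Rop d (Zm 0))
            (((List.finRange n).map fun k =>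
              if χ k.succ then Lop d (Zm k.succ) else Rop d (Zm k.succ)).prod 1)) a b := by
      rw [List.finRange_succ, List.map_cons, List.prod_cons, List.map_map,
        Module.End.mul_apply]
      rfl
    rw [hop]
    rw [sum_cons_split]
    have hinner : ∀ x i',
        (∑ j : Fin (n+1) → Fin d, Umat χ (Fin.cons x i') j a b • Wprod Zm (Fin.cons x i') j)
          = ∑ y : Fin d, ∑ j' : Fin n → Fin d,
              Umat χ (Fin.cons x i') (Fin.cons y j') a b • Wprod Zm (Fin.cons x i') (Fin.cons y j') :=
      fun x i' => sum_cons_split _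
    rw [Finset.sum_congr rfl fun x _ => Finset.sum_congr rfl fun i' _ => hinner x i']
    cases hχ : χ 0 with
    | true =>
      rw [if_pos rfl]
      rw [Lop_apply, Matrix.mul_apply]
      calc
        ∑ c, Zm 0 a c * (((List.finRange n).map fun k =>
              if χ k.succ then Lop d (Zm k.succ) else Rop d (Zm k.succ)).prod 1) c b
            = ∑ c, Zm 0 a c * ∑ i' : Fin n → Fin d, ∑ j' : Fin n → Fin d,
                Umat (fun k => χ k.succ) i' j' c b • Wprod (fun k => Zm k.succ) i' j' :=
          Finset.sum_congr rfl fun c _ => by rw [IH (fun k => χ k.succ) (fun k => Zm k.succ) c b]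
        _ = ∑ c, ∑ i' : Fin n → Fin d, ∑ j' : Fin n → Fin d,
              Umat (fun k => χ k.succ) i' j' c b •
                (Zm 0 a c * Wprod (fun k => Zm k.succ) i' j') := by
          refine Finset.sum_congr rfl fun c _ => ?_
          rw [Finset.mul_sum]
          refine Finset.sum_congr rfl fun i' _ => ?_
          rw [Finset.mul_sum]
          exact Finset.sum_congr rfl fun j' _ => mul_smul_comm _ _ _
        _ = ∑ i' : Fin n → Fin d, ∑ c, ∑ j' : Fin n → Fin d,
              Umat (fun k => χ k.succ) i' j' c b •
                (Zm 0 a c * Wprod (fun k => Zm k.succ) i' j') := Finset.sum_comm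
        _ = ∑ x, ∑ i' : Fin n → Fin d, ∑ y, ∑ j' : Fin n → Fin d,
              Umat χ (Fin.cons x i') (Fin.cons y j') a b •
                Wprod Zm (Fin.cons x i') (Fin.cons y j') := by
          rw [Finset.sum_congr rfl fun x _ => Finset.sum_congr rfl fun i' _ =>
            Finset.sum_congr rfl fun y _ => Finset.sum_congr rfl fun j' _ => by
              rw [Umat_cons_true χ hχ, Wprod_cons, unitL, ite_smul, zero_smul]]
          rw [Finset.sum_congr rfl fun x _ => (by
            split_ifs with h
            · subst h; rfl
            · simp : (∑ i' : Fin n → Fin d, ∑ y, ∑ j' : Fin n → Fin d,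
                if a = x then Umat (fun k => χ k.succ) i' j' y b •
                  (Zm 0 x y * Wprod (fun k => Zm k.succ) i' j') else 0)
              = if a = x then ∑ i' : Fin n → Fin d, ∑ y, ∑ j' : Fin n → Fin d,
                  Umat (fun k => χ k.succ) i' j' y b •
                    (Zm 0 x y * Wprod (fun k => Zm k.succ) i' j') else 0)]
          rw [Finset.sum_ite_eq]
          simp
    | false =>
      rw [if_neg (by simp)]
      rw [Rop_apply, Matrix.transpose_apply, Matrix.mul_apply]
      simp only [Matrix.transpose_apply]
      calc
        ∑ c, Zm 0 c b * (((List.finRange n).map fun k =>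
              if χ k.succ then Lop d (Zm k.succ) else Rop d (Zm k.succ)).prod 1) a c
            = ∑ c, Zm 0 c b * ∑ i' : Fin n → Fin d, ∑ j' : Fin n → Fin d,
                Umat (fun k => χ k.succ) i' j' a c • Wprod (fun k => Zm k.succ) i' j' :=
          Finset.sum_congr rfl fun c _ => by rw [IH (fun k => χ k.succ) (fun k => Zm k.succ) a c]
        _ = ∑ c, ∑ i' : Fin n → Fin d, ∑ j' : Fin n → Fin d,
              Umat (fun k => χ k.succ) i' j' a c •
                (Zm 0 c b * Wprod (fun k => Zm k.succ) i' j') := by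
          refine Finset.sum_congr rfl fun c _ => ?_
          rw [Finset.mul_sum]
          refine Finset.sum_congr rfl fun i' _ => ?_
          rw [Finset.mul_sum]
          exact Finset.sum_congr rfl fun j' _ => mul_smul_comm _ _ _
        _ = ∑ x, ∑ i' : Fin n → Fin d, ∑ y, ∑ j' : Fin n → Fin d,
              Umat χ (Fin.cons x i') (Fin.cons y j') a b •
                Wprod Zm (Fin.cons x i') (Fin.cons y j') := by
          rw [Finset.sum_congr rfl fun x _ => Finset.sum_congr rfl fun i' _ =>
            Finset.sum_congr rfl fun y _ => Finset.sum_congr rfl fun j' _ => by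
              rw [Umat_cons_false χ hχ, Wprod_cons, unitR, ite_smul, zero_smul]]
          rw [Finset.sum_congr rfl fun x _ => Finset.sum_congr rfl fun i' _ =>
            Finset.sum_congr rfl fun y _ => (by
              split_ifs with h
              · rfl
              · simp : (∑ j' : Fin n → Fin d,
                  if b = y then Umat (fun k => χ k.succ) i' j' a x •
                    (Zm 0 x y * Wprod (fun k => Zm k.succ) i' j') else 0)
                = if b = y then ∑ j' : Fin n → Fin d,
                    Umat (fun k => χ k.succ) i' j' a x •
                      (Zm 0 x y * Wprod (fun k => Zm k.succ) i' j') else 0)]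
          rw [Finset.sum_congr rfl fun x _ => Finset.sum_congr rfl fun i' _ =>
            Finset.sum_ite_eq Finset.univ b (fun y => ∑ j' : Fin n → Fin d,
              Umat (fun k => χ k.succ) i' j' a x •
                (Zm 0 x y * Wprod (fun k => Zm k.succ) i' j'))]
          simp

/-- Let `(A, φ)` be a non-commutative probability space,
`χ : {1,…,n} → {ℓ,r}`, and `[Z_{k;i,j}] ∈ M_d(A)` for `1 ≤ k ≤ n`.  Set `Z_k = L([Z_{k;i,j}])`
if `χ(k) = ℓ` and `Z_k = R([Z_{k;i,j}])` if `χ(k) = r`.  Then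
`E_d(Z₁⋯Z_n) = Σ_{i₁,…,i_n, j₁,…,j_n} φ(Z_{1;i₁,j₁} ⋯ Z_{n;i_n,j_n}) ·
E_{i_{s_χ(1)}, j_{s_χ(1)}} ⋯ E_{i_{s_χ(n)}, j_{s_χ(n)}}`, where the `E_{i,j}` are the scalar
matrix units and `s = s_χ` is characterized by `hs₁, hs₂, hs₃`. -/
theorem stmt7 (n d : ℕ) (φ : A →ₗ[ℂ] ℂ) (hφ : φ 1 = 1)
    (χ : Fin n → Bool) (s : Equiv.Perm (Fin n))
    (hs₁ : ∀ i j : Fin n, i < j → χ (s i) = true → χ (s j) = true → s i < s j)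
    (hs₂ : ∀ i j : Fin n, i < j → χ (s i) = false → χ (s j) = false → s j < s i)
    (hs₃ : ∀ i j : Fin n, i < j → χ (s i) = false → χ (s j) = false)
    (Zm : Fin n → Matrix (Fin d) (Fin d) A) :
    Ed d φ (((List.finRange n).map fun k =>
        if χ k then Lop d (Zm k) else Rop d (Zm k)).prod)
      = ∑ i : Fin n → Fin d, ∑ j : Fin n → Fin d,
          φ (((List.finRange n).map fun k => Zm k (i k) (j k)).prod) •
            ((List.finRange n).map fun k =>
              Matrix.single (i (s k)) (j (s k)) (1 : ℂ)).prod := by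
  have hmap := map_s_eq χ s hs₁ hs₂ hs₃
  ext a b
  have hU : ∀ i j : Fin n → Fin d,
      ((List.finRange n).map fun k =>
          Matrix.single (i (s k)) (j (s k)) (1 : ℂ)).prod = Umat χ i j := by
    intro i j
    unfold Umat
    rw [← hmap, List.map_map]
    rfl
  have hE : Ed d φ (((List.finRange n).map fun k =>
        if χ k then Lop d (Zm k) else Rop d (Zm k)).prod) a b
      = φ ((((List.finRange n).map fun k =>
          if χ k then Lop d (Zm k) else Rop d (Zm k)).prod 1) a b) := rfl
  rw [hE, key d n χ Zm a b, map_sum]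
  simp only [map_sum, smul_eq_mul, _root_.map_smul, Matrix.sum_apply, Matrix.smul_apply]
  refine Finset.sum_congr rfl fun i _ => Finset.sum_congr rfl fun j _ => ?_
  rw [hU i j]
  show Umat χ i j a b * φ (Wprod Zm i j) = φ (Wprod Zm i j) * Umat χ i j a b
  exact mul_comm _ _


end
end

section
/- Fix n ≥ 1 and let σ_n be the partition of {1,…,2n} with blocks {1,2}, {3,4}, …, {2n−1,2n}. Let π be a non-crossing partition of {1,…,2n} such that π ∨ σ_n = 1_{2n} (the one-block partition) and such that no block of π contains both an even and an odd number. Then there exists a unique odd number m ∈ {1,…,2n−1} such that 1 and m lie in the same block of π and m+1 and 2n lie in the same block of π. -/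
/-- A partition of `Fin m` (encoded as a `Setoid`) is non-crossing if there are no
`a < b < c < d` with `a, c` in one block and `b, d` in a different block. -/
def NonCrossingPart {m : ℕ} (π : Setoid (Fin m)) : Prop :=
  ∀ a b c d : Fin m, a < b → b < c → c < d → π.r a c → π.r b d → π.r a b

/-- Fix `n ≥ 1` and let `σ_n` be the partition of `{1,…,2n}` with blocks
`{1,2}, {3,4}, …, {2n−1,2n}` (here encoded `0`-indexed as `Setoid.ker (·.val / 2)` on
`Fin (2n)`).  Let `π` be a non-crossing partition of `{1,…,2n}` such that `π ∨ σ_n = 1_{2n}`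
(the one-block partition `⊤`) and such that no block of `π` contains both an even and an odd
number.  Then there exists a unique odd number `m ∈ {1,…,2n−1}` (encoded `0`-indexed as an
even `m < 2n`) such that `1` and `m` lie in the same block of `π` and `m+1` and `2n` lie in
the same block of `π`. -/
theorem stmt13 (n : ℕ) (hn : 0 < n) (π : Setoid (Fin (2 * n)))
    (hnc : NonCrossingPart π)
    (hjoin : π ⊔ Setoid.ker (fun i : Fin (2 * n) => i.val / 2) = ⊤)
    (hpar : ∀ i j : Fin (2 * n), π.r i j → i.val % 2 = j.val % 2) :
    ∃! m : ℕ, ∃ (h₁ : m < 2 * n) (h₂ : m + 1 < 2 * n),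
      m % 2 = 0 ∧ π.r ⟨0, by omega⟩ ⟨m, h₁⟩ ∧ π.r ⟨m + 1, h₂⟩ ⟨2 * n - 1, by omega⟩ := by
  classical
  have hN0 : 0 < 2 * n := by omega
  -- m := largest element of the block of 0
  let P : ℕ → Prop := fun k => ∃ h : k < 2 * n, π.r ⟨0, hN0⟩ ⟨k, h⟩
  set m := Nat.findGreatest P (2 * n - 1) with hm
  have hP0 : P 0 := ⟨hN0, π.refl' _⟩
  have hPm : P m := Nat.findGreatest_spec (Nat.zero_le _) hP0
  obtain ⟨hmN, hrm⟩ := hPm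
  have hmax : ∀ l (h : l < 2 * n), π.r ⟨0, hN0⟩ ⟨l, h⟩ → l ≤ m := by
    intro l h hr
    exact Nat.le_findGreatest (by omega) ⟨h, hr⟩
  have hmeven : m % 2 = 0 := by
    have := hpar _ _ hrm; simp at this; omega
  have hm1N : m + 1 < 2 * n := by omega
  -- M := largest element of the block of m+1
  let Q : ℕ → Prop := fun k => ∃ h : k < 2 * n, π.r ⟨m + 1, hm1N⟩ ⟨k, h⟩
  set M := Nat.findGreatest Q (2 * n - 1) with hMdef
  have hQm1 : Q (m + 1) := ⟨hm1N, π.refl' _⟩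
  have hQM : Q M := Nat.findGreatest_spec (by omega) hQm1
  obtain ⟨hMN, hrM⟩ := hQM
  have hMmax : ∀ l (h : l < 2 * n), π.r ⟨m + 1, hm1N⟩ ⟨l, h⟩ → l ≤ M := by
    intro l h hr
    exact Nat.le_findGreatest (by omega) ⟨h, hr⟩
  have hm1M : m + 1 ≤ M := Nat.le_findGreatest (by omega) hQm1
  have hModd : M % 2 = 1 := by
    have := hpar _ _ hrM; simp at this; omega
  -- key closure lemma: no π-block crosses the cut at M
  have hclosed : ∀ i j : Fin (2 * n), π.r i j → i.val ≤ M → j.val ≤ M := by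
    intro i j hr hiM
    by_contra hj
    push_neg at hj
    have hjN := j.isLt
    rcases Nat.lt_or_ge m i.val with hmi | him
    · -- m+1 ≤ i ≤ M
      rcases Nat.lt_or_ge (m + 1) i.val with h1 | h2
      · rcases Nat.lt_or_ge i.val M with h3 | h4
        · have key := hnc ⟨m + 1, hm1N⟩ i ⟨M, hMN⟩ j h1 h3 hj hrM hr
          have : π.r ⟨m + 1, hm1N⟩ j := π.trans' key hr
          have := hMmax j.val j.isLt this
          omega
        · -- i = M
          have hiM' : i = ⟨M, hMN⟩ := by apply Fin.ext; show i.val = M; omega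
          have : π.r ⟨m + 1, hm1N⟩ j := π.trans' hrM (hiM' ▸ hr)
          have := hMmax j.val j.isLt this
          omega
      · -- i = m+1
        have hi' : i = ⟨m + 1, hm1N⟩ := by apply Fin.ext; show i.val = m + 1; omega
        have := hMmax j.val j.isLt (hi' ▸ hr)
        omega
    · -- i ≤ m
      have h0j : π.r ⟨0, hN0⟩ j := by
        rcases Nat.eq_zero_or_pos i.val with h0 | hpos
        · have : i = ⟨0, hN0⟩ := by apply Fin.ext; show i.val = 0; omega
          exact this ▸ hr
        · rcases Nat.lt_or_ge i.val m with h3 | h4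
          · have key := hnc ⟨0, hN0⟩ i ⟨m, hmN⟩ j hpos h3 (show (m:ℕ) < j.val by omega) hrm hr
            exact π.trans' key hr
          · have : i = ⟨m, hmN⟩ := by apply Fin.ext; show i.val = m; omega
            exact π.trans' hrm (this ▸ hr)
      have := hmax j.val j.isLt h0j
      omega
  -- M = 2n - 1, via join = ⊤
  have hMtop : M = 2 * n - 1 := by
    by_contra hne
    have hMlt : M + 1 < 2 * n := by omega
    have hle : (π ⊔ Setoid.ker (fun i : Fin (2 * n) => i.val / 2)) ≤
        Setoid.ker (fun i : Fin (2 * n) => i.val ≤ M) := by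
      apply sup_le
      · rw [Setoid.le_def]
        intro x y hr
        show (x.val ≤ M) = (y.val ≤ M)
        have h1 := hclosed x y hr
        have h2 := hclosed y x (π.symm' hr)
        simp only [eq_iff_iff]; constructor <;> [exact h1; exact h2]
      · rw [Setoid.le_def]
        intro x y hr
        show (x.val ≤ M) = (y.val ≤ M)
        have : x.val / 2 = y.val / 2 := hr
        simp only [eq_iff_iff]; omega
    rw [hjoin] at hle
    have h1 := Setoid.le_def.mp hle (x := ⟨0, hN0⟩) (y := ⟨M + 1, hMlt⟩) trivial
    have h2 : (0 ≤ M) = (M + 1 ≤ M) := h1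
    simp at h2
  -- existence witness
  have hlast : π.r ⟨m + 1, hm1N⟩ ⟨2 * n - 1, by omega⟩ := by
    have he : (⟨M, hMN⟩ : Fin (2 * n)) = ⟨2 * n - 1, by omega⟩ := by
      apply Fin.ext; simpa using hMtop
    exact he ▸ hrM
  refine ⟨m, ⟨hmN, hm1N, hmeven, hrm, hlast⟩, ?_⟩
  rintro m' ⟨h₁, h₂, hev, hr0, hr1⟩
  have hm'le : m' ≤ m := hmax m' h₁ hr0
  by_contra hne
  have hlt : m' < m := lt_of_le_of_ne hm'le hne
  have hm1lt : m' + 1 < m := by omega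
  have hmlt : m < 2 * n - 1 := by omega
  have hrm'm : π.r ⟨m', h₁⟩ ⟨m, hmN⟩ := π.trans' (π.symm' hr0) hrm
  have key := hnc ⟨m', h₁⟩ ⟨m' + 1, h₂⟩ ⟨m, hmN⟩ ⟨2 * n - 1, by omega⟩
    (by simp) hm1lt hmlt hrm'm hr1
  have := hpar _ _ key
  simp at this
  omega
end

section
/- For n ≥ 1, let BNC'(n) be the set of non-crossing partitions π of {1,…,2n} such that {1} is a singleton block of π, no block of π contains both an even and an odd number, and π ∨ σ_n = 1_{2n} where σ_n has blocks {1,2},{3,4},…,{2n−1,2n}. Then the map sending a non-crossing partition τ of the odd numbers {1,3,…,2n−1} with {1} a singleton block to τ ∪ K(τ) (where K(τ) is the Kreweras complement of τ placed on the even numbers {2,4,…,2n}) is a bijection onto BNC'(n). -/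
/-- The inclusion of the odd numbers `{1, 3, …, 2n−1}` into `{1, …, 2n}`
(`0`-indexed: `k ↦ 2k`). -/
def oddPos (n : ℕ) (k : Fin n) : Fin (2 * n) :=
  ⟨2 * k.val, by have := k.isLt; omega⟩

/-- `{1}` is a singleton block of the partition `τ` (of a `Fin`-type, `0`-indexed). -/
def SingletonOne {m : ℕ} (τ : Setoid (Fin m)) : Prop :=
  ∀ x y : Fin m, x.val = 0 → τ.r x y → y = x

/-- No block contains both an even and an odd number (`1`-indexed), i.e. the partition of
`{1,…,2n}` splits as a partition of the odds together with one of the evens. -/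
def NoParityMix (n : ℕ) (π : Setoid (Fin (2 * n))) : Prop :=
  ∀ i j : Fin (2 * n), π.r i j → i.val % 2 = j.val % 2

/-- `π` is a partition of `{1,…,2n}` which mixes no parities, is non-crossing, and whose
restriction to the odd numbers is `τ`. -/
def CombinedWith (n : ℕ) (τ : Setoid (Fin n)) (π : Setoid (Fin (2 * n))) : Prop :=
  NonCrossingPart π ∧ NoParityMix n π ∧ Setoid.comap (oddPos n) π = τ

/-- `π = τ ∪ K(τ)`: among all non-crossing parity-respecting partitions of `{1,…,2n}`
restricting to `τ` on the odd numbers, `π` is the largest one — this is precisely the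
defining property of the Kreweras complement `K(τ)` placed on the even numbers. -/
def IsKrewerasExtension (n : ℕ) (τ : Setoid (Fin n)) (π : Setoid (Fin (2 * n))) : Prop :=
  CombinedWith n τ π ∧ ∀ π' : Setoid (Fin (2 * n)), CombinedWith n τ π' → π' ≤ π

/-- Membership in `BNC'(n)`: `π` is a non-crossing partition of `{1,…,2n}` with `{1}` a
singleton block, no block containing both an even and an odd number, and
`π ∨ σ_n = 1_{2n}` where `σ_n` has blocks `{1,2},{3,4},…,{2n−1,2n}`. -/
def MemBNC' (n : ℕ) (π : Setoid (Fin (2 * n))) : Prop :=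
  NonCrossingPart π ∧ SingletonOne π ∧ NoParityMix n π ∧
    π ⊔ Setoid.ker (fun i : Fin (2 * n) => i.val / 2) = ⊤

namespace Stmt14Aux

variable {n : ℕ}

/-- the "Kreweras" relation on Fin n determined by τ : i ~ j iff every τ-block
respects the interval between i and j (exclusive at min side, inclusive at max side). -/
def PP (τ : Setoid (Fin n)) (i j : Fin n) : Prop :=
  ∀ a c : Fin n, τ a c →
    ((i.val < a.val ↔ j.val < a.val) ↔ (i.val < c.val ↔ j.val < c.val))

theorem PP_refl (τ : Setoid (Fin n)) (i : Fin n) : PP τ i i := fun _ _ _ => by tauto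

theorem PP_symm {τ : Setoid (Fin n)} {i j : Fin n} (h : PP τ i j) : PP τ j i :=
  fun a c hac => by have := h a c hac; tauto

theorem PP_trans {τ : Setoid (Fin n)} {i j k : Fin n} (h : PP τ i j) (h' : PP τ j k) :
    PP τ i k := fun a c hac => by have := h a c hac; have := h' a c hac; tauto

def half (x : Fin (2 * n)) : Fin n := ⟨x.val / 2, by have := x.isLt; omega⟩

def oPos (a : Fin n) : Fin (2 * n) := ⟨2 * a.val + 1, by have := a.isLt; omega⟩

/-- the combined partition τ ∪ K(τ) -/
def comb (τ : Setoid (Fin n)) : Setoid (Fin (2 * n)) where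
  r x y := x.val % 2 = y.val % 2 ∧
    (x.val % 2 = 0 → τ (half x) (half y)) ∧
    (x.val % 2 ≠ 0 → PP τ (half x) (half y))
  iseqv := by
    constructor
    · exact fun x => ⟨rfl, fun _ => τ.refl _, fun _ => PP_refl τ _⟩
    · rintro x y ⟨h1, h2, h3⟩
      refine ⟨h1.symm, fun h => τ.symm (h2 (h1 ▸ h)), fun h => PP_symm (h3 (by omega))⟩
    · rintro x y z ⟨h1, h2, h3⟩ ⟨h1', h2', h3'⟩
      refine ⟨h1.trans h1', fun h => τ.trans (h2 h) (h2' (h1 ▸ h)),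
        fun h => PP_trans (h3 h) (h3' (by omega))⟩

theorem comb_mix (τ : Setoid (Fin n)) : NoParityMix n (comb τ) := fun _ _ h => h.1

theorem comb_comap (τ : Setoid (Fin n)) : Setoid.comap (oddPos n) (comb τ) = τ := by
  apply Setoid.ext
  intro a b
  constructor
  · rintro ⟨h1, h2, h3⟩
    have := h2 (by simp [oddPos, Nat.mul_mod_right])
    have ha : half (oddPos n a) = a := by
      apply Fin.ext; simp only [half, oddPos]; omega
    have hb : half (oddPos n b) = b := by
      apply Fin.ext; simp only [half, oddPos]; omega
    rwa [ha, hb] at this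
  · intro h
    refine ⟨by simp [oddPos, Nat.mul_mod_right], fun _ => ?_, fun hc => ?_⟩
    · have ha : half (oddPos n a) = a := by apply Fin.ext; simp only [half, oddPos]; omega
      have hb : half (oddPos n b) = b := by apply Fin.ext; simp only [half, oddPos]; omega
      rwa [ha, hb]
    · exact absurd (by simp [oddPos, Nat.mul_mod_right]) hc



theorem cross {π : Setoid (Fin (2 * n))} (hNC : NonCrossingPart π) (hmix : NoParityMix n π)
    {p s q t : Fin (2 * n)} (h1 : p < s) (h2 : s < q) (h3 : q < t)
    (hpq : π p q) (hst : π s t) (hpar : p.val % 2 ≠ s.val % 2) : False :=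
  hpar (hmix _ _ (hNC p s q t h1 h2 h3 hpq hst))

theorem comb_NC {τ : Setoid (Fin n)} (hτ : NonCrossingPart τ) :
    NonCrossingPart (comb τ) := by
  rintro a b c d hab hbc hcd ⟨e1, e2, e3⟩ ⟨f1, f2, f3⟩
  have hab' : a.val < b.val := hab
  have hbc' : b.val < c.val := hbc
  have hcd' : c.val < d.val := hcd
  have ha2 : (half a).val = a.val / 2 := rfl
  have hb2 : (half b).val = b.val / 2 := rfl
  have hc2 : (half c).val = c.val / 2 := rfl
  have hd2 : (half d).val = d.val / 2 := rfl
  by_cases hp : a.val % 2 = 0 <;> by_cases hq : b.val % 2 = 0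
  · -- both even : use noncrossing of τ
    have h1 := e2 hp
    have h2 := f2 hq
    refine ⟨by omega, fun _ => ?_, fun h => absurd hp h⟩
    exact hτ (half a) (half b) (half c) (half d)
      (by show (half a).val < _ ; omega) (by show (half b).val < _ ; omega)
      (by show (half c).val < _ ; omega) h1 h2
  · -- a,c even, b,d odd : impossible
    exfalso
    have H := f3 hq (half a) (half c) (e2 hp)
    omega
  · -- a,c odd, b,d even : impossible
    exfalso
    have H := e3 hp (half b) (half d) (f2 hq)
    omega
  · -- both odd : the complement relation is noncrossing
    refine ⟨by omega, fun h => absurd h hp, fun _ => ?_⟩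
    intro x y hxy
    have H1 := e3 hp x y hxy
    have H2 := f3 hq x y hxy
    omega

theorem comb_singletonOne {τ : Setoid (Fin n)} (hτ : SingletonOne τ) :
    SingletonOne (comb τ) := by
  rintro x y hx ⟨h1, h2, h3⟩
  have hrel := h2 (by omega)
  have := hτ (half x) (half y) (by show x.val / 2 = 0; omega) hrel
  have : (half y).val = (half x).val := congrArg Fin.val this
  have hy2 : (half y).val = y.val / 2 := rfl
  have hx2 : (half x).val = x.val / 2 := rfl
  apply Fin.ext
  omega

theorem comb_max {τ : Setoid (Fin n)} {π' : Setoid (Fin (2 * n))}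
    (h : CombinedWith n τ π') : π' ≤ comb τ := by
  obtain ⟨hNC, hmix, hcomap⟩ := h
  have hco : ∀ a b : Fin n, τ a b ↔ π' (oddPos n a) (oddPos n b) := by
    intro a b; rw [← hcomap]; rfl
  rw [Setoid.le_def]
  intro x y hxy
  have hpar := hmix _ _ hxy
  refine ⟨hpar, fun h0 => ?_, fun h0 => ?_⟩
  · have hx : oddPos n (half x) = x := by
      apply Fin.ext; show 2 * (x.val / 2) = x.val; omega
    have hy : oddPos n (half y) = y := by
      apply Fin.ext; show 2 * (y.val / 2) = y.val; omega
    rw [hco, hx, hy]; exact hxy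
  · -- odd positions : must show the Kreweras relation PP
    have hx : oPos (half x) = x := by
      apply Fin.ext; show 2 * (x.val / 2) + 1 = x.val; omega
    have hy : oPos (half y) = y := by
      apply Fin.ext; show 2 * (y.val / 2) + 1 = y.val; omega
    have claim : ∀ u v a c : Fin n, π' (oPos u) (oPos v) → π' (oddPos n a) (oddPos n c) →
        u.val < a.val → a.val ≤ v.val → (u.val < c.val ∧ c.val ≤ v.val) := by
      intro u v a c hr hac h1 h2
      by_contra hcon
      rcases (by omega : c.val ≤ u.val ∨ v.val < c.val) with hc | hc
      · exact cross hNC hmix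
          (show (oddPos n c) < (oPos u) from by show 2*c.val < 2*u.val+1; omega)
          (show (oPos u) < (oddPos n a) from by show 2*u.val+1 < 2*a.val; omega)
          (show (oddPos n a) < (oPos v) from by show 2*a.val < 2*v.val+1; omega)
          (π'.symm hac) hr (by show (2*c.val) % 2 ≠ (2*u.val+1) % 2; omega)
      · exact cross hNC hmix
          (show (oPos u) < (oddPos n a) from by show 2*u.val+1 < 2*a.val; omega)
          (show (oddPos n a) < (oPos v) from by show 2*a.val < 2*v.val+1; omega)
          (show (oPos v) < (oddPos n c) from by show 2*v.val+1 < 2*c.val; omega)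
          hr hac (by show (2*u.val+1) % 2 ≠ (2*a.val) % 2; omega)
    intro a c hac
    have hac' := (hco a c).mp hac
    have hr : π' (oPos (half x)) (oPos (half y)) := by rw [hx, hy]; exact hxy
    have K1 := claim (half x) (half y) a c hr hac'
    have K2 := claim (half x) (half y) c a hr (π'.symm hac')
    have K3 := claim (half y) (half x) a c (π'.symm hr) hac'
    have K4 := claim (half y) (half x) c a (π'.symm hr) (π'.symm hac')
    omega


/-- If `t` is the minimum of its τ-block and `M` the maximum, then the Kreweras
relation `PP` relates `t-1` and `M`. -/
theorem gap {τ : Setoid (Fin n)} (hτ : NonCrossingPart τ) {t M : Fin n}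
    (ht : 0 < t.val) (hmin : ∀ x, τ t x → t.val ≤ x.val) (hM : τ t M)
    (hMmax : ∀ x, τ t x → x.val ≤ M.val) :
    PP τ ⟨t.val - 1, by have := t.isLt; omega⟩ M := by
  have htM : t.val ≤ M.val := hmin M hM
  have esc : ∀ a c : Fin n, τ a c → t.val ≤ a.val → a.val ≤ M.val →
      t.val ≤ c.val ∧ c.val ≤ M.val := by
    intro a c hac h1 h2
    by_cases hta : τ t a
    · exact ⟨hmin c (τ.trans hta hac), hMmax c (τ.trans hta hac)⟩
    · have hat : t.val < a.val := by
        rcases Nat.lt_or_ge t.val a.val with h | h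
        · exact h
        · have hat' : a = t := Fin.ext (by omega)
          exact absurd (hat' ▸ τ.refl a) hta
      have haM : a.val < M.val := by
        rcases Nat.lt_or_ge a.val M.val with h | h
        · exact h
        · have haM' : a = M := Fin.ext (by omega)
          exact absurd (haM' ▸ hM) (fun h => hta (haM' ▸ h))
      by_contra hcon
      rcases (by omega : c.val < t.val ∨ M.val < c.val) with hc | hc
      · have hct : τ c t := hτ c t a M hc hat haM (τ.symm hac) hM
        exact absurd (hmin c (τ.symm hct)) (by omega)
      · exact hta (hτ t a M c hat haM hc hM hac)
  intro a c hac
  have E1 := esc a c hac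
  have E2 := esc c a (τ.symm hac)
  show (t.val - 1 < a.val ↔ M.val < a.val) ↔ (t.val - 1 < c.val ↔ M.val < c.val)
  omega

theorem comb_join_top {τ : Setoid (Fin n)} (hτ : NonCrossingPart τ) :
    comb τ ⊔ Setoid.ker (fun i : Fin (2 * n) => i.val / 2) = ⊤ := by
  classical
  set J := comb τ ⊔ Setoid.ker (fun i : Fin (2 * n) => i.val / 2) with hJ
  have hcombJ : ∀ x y, comb τ x y → J x y := fun x y h =>
    Setoid.le_def.mp le_sup_left h
  have hkerJ : ∀ x y : Fin (2 * n), x.val / 2 = y.val / 2 → J x y := fun x y h =>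
    Setoid.le_def.mp le_sup_right h
  apply top_unique
  rw [Setoid.le_def]
  intro x y _
  have hn2 : 0 < 2 * n := by have := x.isLt; omega
  have main : ∀ m : ℕ, ∀ x : Fin (2 * n), x.val ≤ m → J x ⟨0, hn2⟩ := by
    intro m
    induction m with
    | zero =>
      intro x hx
      have hx0 : x = ⟨0, hn2⟩ := Fin.ext ((by omega : x.val = 0) : _)
      subst hx0
      exact J.refl _
    | succ m ih =>
      intro x hx
      rcases Nat.lt_or_ge x.val (m + 1) with h | h
      · exact ih x (by omega)
      have hxv : x.val = m + 1 := by omega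
      by_cases hpar : x.val % 2 = 0
      · -- even position, a τ-point
        set t := half x with hts
        have ht2 : t.val = x.val / 2 := rfl
        have ht1 : 0 < t.val := by omega
        by_cases hex : ∃ s : Fin n, s.val < t.val ∧ τ t s
        · obtain ⟨s, hs1, hs2⟩ := hex
          refine J.trans (hcombJ x (oddPos n s) ?_) (ih (oddPos n s) ?_)
          · have h5 : half (oddPos n s) = s := Fin.ext (by show 2 * s.val / 2 = s.val; omega)
            exact ⟨by show x.val % 2 = 2 * s.val % 2; omega,
              fun _ => by rw [h5]; exact hs2, fun hc => absurd hpar hc⟩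
          · show 2 * s.val ≤ m; omega
        · have hmin : ∀ z, τ t z → t.val ≤ z.val := by
            intro z hz
            by_contra hcon
            exact hex ⟨z, by omega, hz⟩
          obtain ⟨M, hMmem, hMmax'⟩ := Finset.exists_max_image
            (Finset.univ.filter fun y => τ t y) (fun y => y.val)
            ⟨t, by simp only [Finset.mem_filter, Finset.mem_univ, true_and]; exact τ.refl t⟩
          have hM : τ t M := by
            simp only [Finset.mem_filter, Finset.mem_univ, true_and] at hMmem; exact hMmem
          have hMmax : ∀ z, τ t z → z.val ≤ M.val := by
            intro z hz
            exact hMmax' z (by simp only [Finset.mem_filter, Finset.mem_univ, true_and]; exact hz)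
          have hgap := gap hτ ht1 hmin hM hMmax
          set t' : Fin n := ⟨t.val - 1, by have := t.isLt; omega⟩ with ht's
          have htM : t.val ≤ M.val := hmin M hM
          have hMn := M.isLt
          -- chain : x → 2M → 2M+1 → 2t'+1 → 2t' → 0
          have step1 : J x (oddPos n M) := by
            apply hcombJ
            have h5 : half (oddPos n M) = M := Fin.ext (by show 2 * M.val / 2 = M.val; omega)
            exact ⟨by show x.val % 2 = 2 * M.val % 2; omega,
              fun _ => by rw [h5]; exact hM, fun hc => absurd hpar hc⟩
          have step2 : J (oddPos n M) (oPos M) :=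
            hkerJ _ _ (by show 2 * M.val / 2 = (2 * M.val + 1) / 2; omega)
          have step3 : J (oPos M) (oPos t') := by
            apply hcombJ
            have h5 : half (oPos M) = M := Fin.ext (by show (2 * M.val + 1) / 2 = M.val; omega)
            have h6 : half (oPos t') = t' := Fin.ext (by show (2 * t'.val + 1) / 2 = t'.val; omega)
            refine ⟨by show (2 * M.val + 1) % 2 = (2 * t'.val + 1) % 2; omega,
              fun hc => absurd hc (by show ¬(2 * M.val + 1) % 2 = 0; omega), fun _ => ?_⟩
            rw [h5, h6]; exact PP_symm hgap
          have step4 : J (oPos t') (oddPos n t') :=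
            hkerJ _ _ (by show (2 * t'.val + 1) / 2 = 2 * t'.val / 2; omega)
          have step5 : J (oddPos n t') ⟨0, hn2⟩ := by
            apply ih
            show 2 * t'.val ≤ m
            have : t'.val = t.val - 1 := rfl
            omega
          exact J.trans step1 (J.trans step2 (J.trans step3 (J.trans step4 step5)))
      · -- odd position : go to the τ-point at its left
        have hx0 : 0 < x.val := by omega
        refine J.trans (hkerJ x ⟨x.val - 1, by omega⟩ (by show x.val / 2 = (x.val - 1) / 2; omega))
          (ih _ (by show x.val - 1 ≤ m; omega))
  exact J.trans (main x.val x le_rfl) (J.symm (main y.val y le_rfl))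

section Big

variable {τ : Setoid (Fin n)} {π : Setoid (Fin (2 * n))}

/-- atomic pairs of the Kreweras relation -/
def AtomicP (τ : Setoid (Fin n)) (i j : Fin n) : Prop :=
  i.val < j.val ∧ PP τ i j ∧ ∀ k : Fin n, i.val < k.val → k.val < j.val → ¬ PP τ i k

theorem tau_NC (hNC : NonCrossingPart π) (hcomap : Setoid.comap (oddPos n) π = τ) :
    NonCrossingPart τ := by
  have hco : ∀ a b : Fin n, τ a b ↔ π (oddPos n a) (oddPos n b) := by
    intro a b; rw [← hcomap]; rfl
  intro a b c d hab hbc hcd h1 h2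
  rw [hco] at h1 h2 ⊢
  exact hNC _ _ _ _ (by show 2*a.val < 2*b.val; have := Fin.lt_def.mp hab; omega)
    (by show 2*b.val < 2*c.val; have := Fin.lt_def.mp hbc; omega)
    (by show 2*c.val < 2*d.val; have := Fin.lt_def.mp hcd; omega) h1 h2

/-- if `(i,j)` is an atomic Kreweras pair then the τ-block of `i+1` has minimum `i+1`
and maximum `j`. -/
theorem atom_block (hτ : NonCrossingPart τ) {i j : Fin n} (h : AtomicP τ i j) :
    τ ⟨i.val + 1, by have := j.isLt; have := h.1; omega⟩ j ∧
      ∀ x, τ ⟨i.val + 1, by have := j.isLt; have := h.1; omega⟩ x →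
        i.val < x.val ∧ x.val ≤ j.val := by
  classical
  obtain ⟨hij, hPP, hatom⟩ := h
  set k : Fin n := ⟨i.val + 1, by have := j.isLt; have := hij; omega⟩ with hk
  have hkv : k.val = i.val + 1 := rfl
  have blockin : ∀ x, τ k x → i.val < x.val ∧ x.val ≤ j.val := by
    intro x hx
    have H := hPP k x hx
    omega
  refine ⟨?_, blockin⟩
  have hmin : ∀ x, τ k x → k.val ≤ x.val := fun x hx => by have := blockin x hx; omega
  obtain ⟨M, hMmem, hMmax'⟩ := Finset.exists_max_image
    (Finset.univ.filter fun y => τ k y) (fun y => y.val)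
    ⟨k, by simp only [Finset.mem_filter, Finset.mem_univ, true_and]; exact τ.refl k⟩
  have hM : τ k M := by
    simp only [Finset.mem_filter, Finset.mem_univ, true_and] at hMmem; exact hMmem
  have hMmax : ∀ z, τ k z → z.val ≤ M.val := by
    intro z hz
    exact hMmax' z (by simp only [Finset.mem_filter, Finset.mem_univ, true_and]; exact hz)
  have hgap := gap hτ (t := k) (by omega) hmin hM hMmax
  have hik : (⟨k.val - 1, by have := k.isLt; omega⟩ : Fin n) = i :=
    Fin.ext (show k.val - 1 = i.val by omega)
  rw [hik] at hgap
  have hMj : M.val = j.val := by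
    have hMle := blockin M hM
    by_contra hne
    exact hatom M (by omega) (by omega) hgap
  have : M = j := Fin.ext hMj
  rwa [this] at hM

variable (hNC : NonCrossingPart π) (hmix : NoParityMix n π)
  (hcomap : Setoid.comap (oddPos n) π = τ)
  (hjoin : π ⊔ Setoid.ker (fun i : Fin (2 * n) => i.val / 2) = ⊤)

/-- the even part of π -/
def SE (π : Setoid (Fin (2 * n))) (a b : Fin n) : Prop := π (oPos a) (oPos b)

include hNC hmix hcomap in
theorem SE_PP : ∀ a b : Fin n, SE π a b → PP τ a b := by
  intro a b h
  have hle := comb_max (τ := τ) ⟨hNC, hmix, hcomap⟩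
  have h2 := Setoid.le_def.mp hle h
  obtain ⟨_, _, h3⟩ := h2
  have ha : half (oPos a) = a := Fin.ext (by show (2*a.val+1)/2 = a.val; omega)
  have hb : half (oPos b) = b := Fin.ext (by show (2*b.val+1)/2 = b.val; omega)
  have := h3 (by show ¬(2*a.val+1) % 2 = 0; omega)
  rwa [ha, hb] at this

theorem chainSE : ∀ (g : ℕ) (l m : Fin n), l.val ≤ m.val → m.val - l.val ≤ g →
    PP τ l m → (∀ a b : Fin n, AtomicP τ a b → b.val ≤ m.val → SE π a b) → SE π l m := by
  classical
  intro g
  induction g with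
  | zero =>
    intro l m h1 h2 _ _
    have : l = m := Fin.ext (by omega)
    rw [this]; exact π.refl _
  | succ g ih =>
    intro l m h1 h2 hPP hyp
    rcases Nat.eq_or_lt_of_le h1 with he | hlt
    · have : l = m := Fin.ext he
      rw [this]; exact π.refl _
    · obtain ⟨c, hcmem, hcmin'⟩ := Finset.exists_min_image
        (Finset.univ.filter fun x : Fin n => l.val < x.val ∧ PP τ l x) (fun y => y.val)
        ⟨m, by simp only [Finset.mem_filter, Finset.mem_univ, true_and]; exact ⟨hlt, hPP⟩⟩
      simp only [Finset.mem_filter, Finset.mem_univ, true_and] at hcmem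
      obtain ⟨hlc, hPPlc⟩ := hcmem
      have hcmin : ∀ z : Fin n, l.val < z.val → PP τ l z → c.val ≤ z.val := by
        intro z hz1 hz2
        exact hcmin' z (by simp only [Finset.mem_filter, Finset.mem_univ, true_and]; exact ⟨hz1, hz2⟩)
      have hcm : c.val ≤ m.val := hcmin m hlt hPP
      have hatomic : AtomicP τ l c := by
        refine ⟨hlc, hPPlc, fun z hz1 hz2 hP => ?_⟩
        have := hcmin z hz1 hP
        omega
      have hSElc : SE π l c := hyp l c hatomic hcm
      have hPPcm : PP τ c m := PP_trans (PP_symm hPPlc) hPP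
      have hrest : SE π c m := ih c m hcm (by omega) hPPcm
        (fun a b hab hbm => hyp a b hab hbm)
      exact π.trans hSElc hrest

include hNC hmix hcomap hjoin in
theorem allatom : ∀ (g : ℕ) (M : Fin n), M.val ≤ g → ∀ i : Fin n, AtomicP τ i M → SE π i M := by
  classical
  have hτ : NonCrossingPart τ := tau_NC hNC hcomap
  have hco : ∀ a b : Fin n, τ a b ↔ π (oddPos n a) (oddPos n b) := by
    intro a b; rw [← hcomap]; rfl
  intro g
  induction g with
  | zero =>
    intro M hM i hatom
    exact absurd hatom.1 (by omega)
  | succ g ih =>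
    intro M hMg i hatom
    have hiM : i.val < M.val := hatom.1
    have hPPiM : PP τ i M := hatom.2.1
    set k : Fin n := ⟨i.val + 1, by have := M.isLt; omega⟩ with hks
    have hkv : k.val = i.val + 1 := rfl
    obtain ⟨hkM, hblock⟩ := atom_block hτ hatom
    have hkMv : k.val ≤ M.val := by omega
    by_cases hl : ∃ l : Fin n, l.val < k.val ∧ SE π l M
    · obtain ⟨l, hl1, hl2⟩ := hl
      rcases Nat.eq_or_lt_of_le (by omega : l.val ≤ i.val) with he | hlt
      · have : l = i := Fin.ext he
        rwa [this] at hl2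
      · have hPPlM : PP τ l M := SE_PP hNC hmix hcomap l M hl2
        have hPPli : PP τ l i := PP_trans hPPlM (PP_symm hPPiM)
        have hSEli : SE π l i := by
          apply chainSE i.val l i (by omega) (by omega) hPPli
          intro a b hab hbi
          have hbv : b.val ≤ g := by omega
          exact ih b hbv a hab
        exact π.trans (π.symm hSEli) hl2
    · -- no element of the σ_e-class of M lies left of k : build a closed set
      exfalso
      have hno : ∀ l : Fin n, SE π l M → k.val ≤ l.val := by
        intro l hlM
        by_contra hcon
        exact hl ⟨l, by omega, hlM⟩
      obtain ⟨L, hLmem, hLmax'⟩ := Finset.exists_max_image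
        (Finset.univ.filter fun x : Fin n => SE π M x) (fun y => y.val)
        ⟨M, by simp only [Finset.mem_filter, Finset.mem_univ, true_and]; exact π.refl _⟩
      have hL : SE π M L := by
        simp only [Finset.mem_filter, Finset.mem_univ, true_and] at hLmem; exact hLmem
      have hLmax : ∀ z, SE π M z → z.val ≤ L.val := by
        intro z hz
        exact hLmax' z (by simp only [Finset.mem_filter, Finset.mem_univ, true_and]; exact hz)
      have hML : M.val ≤ L.val := hLmax M (π.refl _)
      have hPPML : PP τ M L := SE_PP hNC hmix hcomap M L hL
      -- the set of positions [2k, 2L+1] is closed under π and under the pairing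
      have claim : ∀ x y : Fin (2 * n), π x y →
          (2 * k.val ≤ x.val ∧ x.val ≤ 2 * L.val + 1) →
          (2 * k.val ≤ y.val ∧ y.val ≤ 2 * L.val + 1) := by
        intro x y hxy hZx
        have hpar := hmix x y hxy
        by_cases hp : x.val % 2 = 0
        · -- τ-points : blocks respect [k,M] and (M,L]
          have hx : oddPos n (half x) = x := Fin.ext (by show 2*(x.val/2) = x.val; omega)
          have hy : oddPos n (half y) = y := Fin.ext (by show 2*(y.val/2) = y.val; omega)
          have hab : τ (half x) (half y) := by
            rw [hco, hx, hy]; exact hxy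
          have H1 := hPPiM (half x) (half y) hab
          have H2 := hPPML (half x) (half y) hab
          have e1 : (half x).val = x.val / 2 := rfl
          have e2 : (half y).val = y.val / 2 := rfl
          omega
        · -- K-points
          have hx : oPos (half x) = x := Fin.ext (by show 2*(x.val/2)+1 = x.val; omega)
          have hy : oPos (half y) = y := Fin.ext (by show 2*(y.val/2)+1 = y.val; omega)
          set a := half x with has
          set b := half y with hbs
          have hab : SE π a b := by show π (oPos a) (oPos b); rw [hx, hy]; exact hxy
          have e1 : a.val = x.val / 2 := rfl
          have e2 : b.val = y.val / 2 := rfl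
          have haZ : k.val ≤ a.val ∧ a.val ≤ L.val := by omega
          by_cases haM : SE π a M
          · have hMb : SE π M b := π.trans (π.symm haM) hab
            have := hno b (π.symm hMb)
            have := hLmax b hMb
            omega
          · have haMne : a.val ≠ M.val := by
              intro he
              exact haM (by have : a = M := Fin.ext he; rw [this]; exact π.refl _)
            by_contra hcon
            have hbout : b.val < k.val ∨ L.val < b.val := by omega
            rcases Nat.lt_or_ge a.val M.val with haM2 | haM2
            · -- a ∈ [k, M)
              rcases hbout with hb | hb
              · exact cross hNC hmix
                  (show oPos b < oddPos n k from by show 2*b.val+1 < 2*k.val; omega)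
                  (show oddPos n k < oPos a from by show 2*k.val < 2*a.val+1; omega)
                  (show oPos a < oddPos n M from by show 2*a.val+1 < 2*M.val; omega)
                  (π.symm hab) ((hco k M).mp hkM)
                  (by show (2*b.val+1)%2 ≠ (2*k.val)%2; omega)
              · exact cross hNC hmix
                  (show oddPos n k < oPos a from by show 2*k.val < 2*a.val+1; omega)
                  (show oPos a < oddPos n M from by show 2*a.val+1 < 2*M.val; omega)
                  (show oddPos n M < oPos b from by show 2*M.val < 2*b.val+1; omega)
                  ((hco k M).mp hkM) hab
                  (by show (2*k.val)%2 ≠ (2*a.val+1)%2; omega)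
            · -- a ∈ (M, L]
              have haM3 : M.val < a.val := by omega
              have haL : a.val < L.val := by
                rcases Nat.lt_or_ge a.val L.val with h | h
                · exact h
                · exfalso
                  have : a = L := Fin.ext (by omega)
                  exact haM (by rw [this]; exact π.symm hL)
              rcases hbout with hb | hb
              · have hbM : b.val < M.val := by omega
                have := hNC (oPos b) (oPos M) (oPos a) (oPos L)
                  (by show 2*b.val+1 < 2*M.val+1; omega)
                  (by show 2*M.val+1 < 2*a.val+1; omega)
                  (by show 2*a.val+1 < 2*L.val+1; omega)
                  (π.symm hab) hL
                have := hno b this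
                omega
              · have := hNC (oPos M) (oPos a) (oPos L) (oPos b)
                  (by show 2*M.val+1 < 2*a.val+1; omega)
                  (by show 2*a.val+1 < 2*L.val+1; omega)
                  (by show 2*L.val+1 < 2*b.val+1; omega)
                  hL hab
                exact haM (π.symm this)
      -- build the separating setoid
      let ζ : Setoid (Fin (2 * n)) :=
        ⟨fun x y => ((2 * k.val ≤ x.val ∧ x.val ≤ 2 * L.val + 1) ↔
            (2 * k.val ≤ y.val ∧ y.val ≤ 2 * L.val + 1)),
          ⟨fun _ => Iff.rfl, Iff.symm, Iff.trans⟩⟩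
      have hπζ : π ≤ ζ := by
        rw [Setoid.le_def]
        intro x y hxy
        exact ⟨claim x y hxy, claim y x (π.symm hxy)⟩
      have hσζ : Setoid.ker (fun i : Fin (2 * n) => i.val / 2) ≤ ζ := by
        rw [Setoid.le_def]
        intro x y hxy
        have h2 : x.val / 2 = y.val / 2 := hxy
        show (2 * k.val ≤ x.val ∧ x.val ≤ 2 * L.val + 1) ↔
          (2 * k.val ≤ y.val ∧ y.val ≤ 2 * L.val + 1)
        omega
      have htop : (⊤ : Setoid (Fin (2 * n))) ≤ ζ := by
        rw [← hjoin]
        exact sup_le hπζ hσζ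
      have hcontra : ζ (oPos i) (oddPos n k) := Setoid.le_def.mp htop trivial
      have : (2 * k.val ≤ 2*i.val+1 ∧ 2*i.val+1 ≤ 2 * L.val + 1) ↔
          (2 * k.val ≤ 2*k.val ∧ 2*k.val ≤ 2 * L.val + 1) := hcontra
      omega


include hNC hmix hcomap hjoin in
theorem comb_le : comb τ ≤ π := by
  have hco : ∀ a b : Fin n, τ a b ↔ π (oddPos n a) (oddPos n b) := by
    intro a b; rw [← hcomap]; rfl
  have hPPSE : ∀ a b : Fin n, PP τ a b → SE π a b := by
    have hyp : ∀ p q : Fin n, AtomicP τ p q → SE π p q :=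
      fun p q hpq => allatom hNC hmix hcomap hjoin q.val q le_rfl p hpq
    intro a b h
    rcases lt_trichotomy a.val b.val with hlt | heq | hgt
    · exact chainSE b.val a b (by omega) (by omega) h (fun p q hpq _ => hyp p q hpq)
    · have : a = b := Fin.ext heq
      rw [this]; exact π.refl _
    · exact π.symm (chainSE a.val b a (by omega) (by omega) (PP_symm h)
        (fun p q hpq _ => hyp p q hpq))
  rw [Setoid.le_def]
  rintro x y ⟨hp, h2, h3⟩
  by_cases h0 : x.val % 2 = 0
  · have hτxy := h2 h0
    have hx : oddPos n (half x) = x := Fin.ext (by show 2*(x.val/2) = x.val; omega)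
    have hy : oddPos n (half y) = y := Fin.ext (by show 2*(y.val/2) = y.val; omega)
    have := (hco _ _).mp hτxy
    rwa [hx, hy] at this
  · have hPPxy := h3 h0
    have hx : oPos (half x) = x := Fin.ext (by show 2*(x.val/2)+1 = x.val; omega)
    have hy : oPos (half y) = y := Fin.ext (by show 2*(y.val/2)+1 = y.val; omega)
    have := hPPSE _ _ hPPxy
    show π x y
    rw [← hx, ← hy]
    exact this

end Big

end Stmt14Aux

open Stmt14Aux in
/-- For `n ≥ 1`, the map sending a non-crossing partition `τ` of the odd
numbers `{1,3,…,2n−1}` with `{1}` a singleton block to `τ ∪ K(τ)` (the Kreweras complement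
`K(τ)` placed on the even numbers `{2,4,…,2n}`) is a bijection onto `BNC'(n)`: every such
`τ` admits a unique Kreweras extension, this extension lies in `BNC'(n)`, every member of
`BNC'(n)` arises this way, and the assignment is injective. -/
theorem stmt14 (n : ℕ) (hn : 0 < n) :
    (∀ τ : Setoid (Fin n), NonCrossingPart τ → SingletonOne τ →
      ∃! π : Setoid (Fin (2 * n)), IsKrewerasExtension n τ π) ∧
    (∀ (τ : Setoid (Fin n)) (π : Setoid (Fin (2 * n))),
      NonCrossingPart τ → SingletonOne τ → IsKrewerasExtension n τ π → MemBNC' n π) ∧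
    (∀ π : Setoid (Fin (2 * n)), MemBNC' n π →
      ∃ τ : Setoid (Fin n), NonCrossingPart τ ∧ SingletonOne τ ∧
        IsKrewerasExtension n τ π) ∧
    (∀ (τ₁ τ₂ : Setoid (Fin n)) (π : Setoid (Fin (2 * n))),
      IsKrewerasExtension n τ₁ π → IsKrewerasExtension n τ₂ π → τ₁ = τ₂) := by

  refine ⟨?_, ?_, ?_, ?_⟩
  · intro τ hτNC hτS1
    refine ⟨comb τ, ⟨⟨comb_NC hτNC, comb_mix τ, comb_comap τ⟩, fun π' h => comb_max h⟩, ?_⟩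
    rintro π' ⟨h1, h2⟩
    exact le_antisymm (comb_max h1) (h2 (comb τ) ⟨comb_NC hτNC, comb_mix τ, comb_comap τ⟩)
  · rintro τ π hτNC hτS1 ⟨hcomb, hmax⟩
    have heq : π = comb τ :=
      le_antisymm (comb_max hcomb) (hmax (comb τ) ⟨comb_NC hτNC, comb_mix τ, comb_comap τ⟩)
    rw [heq]
    exact ⟨comb_NC hτNC, comb_singletonOne hτS1, comb_mix τ, comb_join_top hτNC⟩
  · rintro π ⟨hNC, hS1, hmix, hjoin⟩
    refine ⟨Setoid.comap (oddPos n) π, tau_NC hNC rfl, ?_, ⟨⟨hNC, hmix, rfl⟩, ?_⟩⟩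
    · intro x y hx hr
      have hr' : π (oddPos n x) (oddPos n y) := hr
      have := hS1 (oddPos n x) (oddPos n y) (by show 2*x.val = 0; omega) hr'
      have hval : 2 * y.val = 2 * x.val := congrArg Fin.val this
      exact Fin.ext (by omega)
    · intro π' h
      exact le_trans (comb_max h) (comb_le hNC hmix rfl hjoin)
  · rintro τ₁ τ₂ π ⟨⟨_, _, h1⟩, _⟩ ⟨⟨_, _, h2⟩, _⟩
    rw [← h1, ← h2]
end

section
/- Let n, m ≥ 1, and in the bi-non-crossing setting with n left indices 1_ℓ,…,n_ℓ and 2m right indices 1_r,…,(2m)_r, let σ_{n,m} be the bi-non-crossing partition with blocks {k_ℓ} for 1 ≤ k ≤ n and {(2k−1)_r, (2k)_r} for 1 ≤ k ≤ m. Suppose π is a bi-non-crossing partition with π ∨ σ_{n,m} equal to the one-block partition, no block of π contains both an even-indexed and an odd-indexed right node, and the block V of π containing 1_ℓ contains some even-indexed right node (2k)_r. Then V contains (2m)_r and all of the left nodes 1_ℓ, 2_ℓ, …, n_ℓ. -/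
/-- The permutation-reordering `s_χ` for the `χ` with `n` left indices `1_ℓ,…,n_ℓ`
(the first `n` elements of `Fin (n + 2m)`) and `2m` right indices `1_r,…,(2m)_r`
(the remaining elements): left indices are kept in increasing order, right indices are
read in decreasing order. -/
def sChi (n m : ℕ) : Fin (n + 2 * m) → Fin (n + 2 * m) := fun q =>
  if h : q.val < n then q
  else ⟨n + (2 * m - 1 - (q.val - n)), by have := q.isLt; omega⟩

/-- `π` is bi-non-crossing: it becomes non-crossing after reordering via `s_χ`. -/
def IsBNCnm (n m : ℕ) (π : Setoid (Fin (n + 2 * m))) : Prop :=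
  NonCrossingPart (Setoid.comap (sChi n m) π)

private lemma sChi_left {n m k : ℕ} (hk : k < n) (h : k < n + 2 * m) :
    sChi n m ⟨k, h⟩ = ⟨k, h⟩ := dif_pos hk

private lemma sChi_right {n m s : ℕ} (hs : s < 2 * m) (h : n + s < n + 2 * m) :
    sChi n m ⟨n + s, h⟩ = ⟨n + (2 * m - 1 - s), by omega⟩ := by
  unfold sChi
  rw [dif_neg (by simp)]
  exact Fin.ext (show n + (2 * m - 1 - (n + s - n)) = n + (2 * m - 1 - s) by omega)

private lemma join_closed {α : Type*} (π σ : Setoid α) (S : Set α)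
    (hπ : ∀ x y, π.r x y → x ∈ S → y ∈ S)
    (hσ : ∀ x y, σ.r x y → x ∈ S → y ∈ S)
    {x y : α} (h : (π ⊔ σ).r x y) : x ∈ S ↔ y ∈ S := by
  have h' : Relation.EqvGen (fun a b => π.r a b ∨ σ.r a b) x y := by
    rw [Setoid.sup_eq_eqvGen] at h; exact h
  clear h
  induction h' with
  | rel a b hab =>
      refine ⟨fun ha => ?_, fun hb => ?_⟩
      · exact hab.elim (fun h' => hπ a b h' ha) (fun h' => hσ a b h' ha)
      · exact hab.elim (fun h' => hπ b a (π.symm' h') hb) (fun h' => hσ b a (σ.symm' h') hb)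
  | refl a => exact Iff.rfl
  | symm a b _ ih => exact ih.symm
  | trans a b c _ _ ih1 ih2 => exact ih1.trans ih2

set_option maxHeartbeats 2000000 in
/-- Let `n, m ≥ 1`, and in the bi-non-crossing setting with `n` left
indices `1_ℓ,…,n_ℓ` and `2m` right indices `1_r,…,(2m)_r`, let `σ_{n,m}` be the
bi-non-crossing partition with blocks `{k_ℓ}` for `1 ≤ k ≤ n` and `{(2k−1)_r, (2k)_r}` for
`1 ≤ k ≤ m` (encoded as the kernel of the displayed map).  Suppose `π` is a bi-non-crossing
partition with `π ∨ σ_{n,m}` equal to the one-block partition `⊤`, no block of `π` contains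
both an even-indexed and an odd-indexed right node, and the block `V` of `π` containing
`1_ℓ` contains some even-indexed right node `(2k)_r`.  Then `V` contains `(2m)_r` and all of
the left nodes `1_ℓ, 2_ℓ, …, n_ℓ`. -/
theorem stmt15 (n m : ℕ) (hn : 0 < n) (hm : 0 < m)
    (π : Setoid (Fin (n + 2 * m)))
    (hbnc : IsBNCnm n m π)
    (hjoin : π ⊔ Setoid.ker
        (fun q : Fin (n + 2 * m) => if q.val < n then q.val else n + (q.val - n) / 2) = ⊤)
    (hpar : ∀ i j : Fin (n + 2 * m), n ≤ i.val → n ≤ j.val → π.r i j →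
        (i.val - n) % 2 = (j.val - n) % 2)
    (heven : ∃ j : Fin (n + 2 * m), n ≤ j.val ∧ (j.val - n) % 2 = 1 ∧
        π.r ⟨0, by omega⟩ j) :
    π.r ⟨0, by omega⟩ ⟨n + 2 * m - 1, by omega⟩ ∧
    (∀ k : ℕ, ∀ hk : k < n, π.r ⟨0, by omega⟩ ⟨k, by omega⟩) := by
  classical
  have h0lt : 0 < n + 2 * m := by omega
  have hNlt : n + 2 * m - 1 < n + 2 * m := by omega
  obtain ⟨j, hjn, hjodd, hj0⟩ := heven
  have hjlt := j.isLt
  set σ := Setoid.ker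
      (fun q : Fin (n + 2 * m) => if q.val < n then q.val else n + (q.val - n) / 2) with hσdef
  -- the non-crossing condition, in terms of natural-number indices
  have key : ∀ (a b c d : ℕ) (ha : a < n + 2 * m) (hb : b < n + 2 * m) (hc : c < n + 2 * m)
      (hd : d < n + 2 * m), a < b → b < c → c < d →
      π.r (sChi n m ⟨a, ha⟩) (sChi n m ⟨c, hc⟩) → π.r (sChi n m ⟨b, hb⟩) (sChi n m ⟨d, hd⟩) →
      π.r (sChi n m ⟨a, ha⟩) (sChi n m ⟨b, hb⟩) :=
    fun a b c d ha hb hc hd h1 h2 h3 hac hbd =>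
      hbnc ⟨a, ha⟩ ⟨b, hb⟩ ⟨c, hc⟩ ⟨d, hd⟩ h1 h2 h3 hac hbd
  have hPbound : ∀ s : ℕ, n + (2 * m - 1 - s) < n + 2 * m := by intro s; omega
  -- the witness for the minimal `s` with `0 ~ n + (2m-1-s)`
  have hw : π.r ⟨0, by omega⟩
      ⟨n + (2 * m - 1 - (2 * m - 1 - (j.val - n))), hPbound _⟩ := by
    have hje : (⟨n + (2 * m - 1 - (2 * m - 1 - (j.val - n))), hPbound _⟩ : Fin (n + 2 * m)) = j :=
      Fin.ext (show n + (2 * m - 1 - (2 * m - 1 - (j.val - n))) = j.val by omega)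
    rw [hje]; exact hj0
  have hPex : ∃ s : ℕ, π.r ⟨0, by omega⟩ ⟨n + (2 * m - 1 - s), hPbound s⟩ := ⟨_, hw⟩
  obtain ⟨s₁, hs₁, hminP⟩ : ∃ s₁ : ℕ, π.r ⟨0, by omega⟩ ⟨n + (2 * m - 1 - s₁), hPbound s₁⟩ ∧
      ∀ s, s < s₁ → ¬ π.r ⟨0, by omega⟩ ⟨n + (2 * m - 1 - s), hPbound s⟩ := by
    classical
    exact ⟨Nat.find hPex, Nat.find_spec hPex, fun s hs => Nat.find_min hPex hs⟩
  have hs₁le : s₁ ≤ 2 * m - 1 - (j.val - n) := by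
    by_contra hgt
    exact hminP _ (by omega) hw
  -- parity: s₁ is even
  have hpar1 : (j.val - n) % 2 = (n + (2 * m - 1 - s₁) - n) % 2 :=
    hpar j ⟨n + (2 * m - 1 - s₁), hPbound s₁⟩ hjn (Nat.le_add_right n _)
      (π.trans' (π.symm' hj0) hs₁)
  have hs₁even : s₁ % 2 = 0 := by omega
  -- no element `0 ~ u` with u of offset > 2m-1-s₁
  have hmin' : ∀ u : Fin (n + 2 * m), n + (2 * m - 1 - s₁) < u.val →
      ¬ π.r ⟨0, by omega⟩ u := by
    intro u hu h0u
    have hult := u.isLt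
    have hs : 2 * m - 1 - (u.val - n) < s₁ := by omega
    refine hminP _ hs ?_
    have hval : n + (2 * m - 1 - (2 * m - 1 - (u.val - n))) = u.val := by omega
    have he : (⟨n + (2 * m - 1 - (2 * m - 1 - (u.val - n))),
        hPbound (2 * m - 1 - (u.val - n))⟩ : Fin (n + 2 * m)) = u := Fin.ext hval
    rw [he]; exact h0u
  -- PART 1: s₁ = 0
  have hs₁0 : s₁ = 0 := by
    by_contra hne
    have hTodd : (2 * m - 1 - s₁) % 2 = 1 := by omega
    set S : Set (Fin (n + 2 * m)) :=
      {x | ∃ u : Fin (n + 2 * m), n + (2 * m - 1 - s₁) < u.val ∧ π.r x u} with hSdef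
    -- no block meeting low offsets escapes to high offsets
    have hnoesc : ∀ x : Fin (n + 2 * m), x ∈ S → n ≤ x.val →
        n + (2 * m - 1 - s₁) < x.val := by
      intro x hx hnx
      obtain ⟨u, hu, hxu⟩ := hx
      by_contra hle
      push_neg at hle
      have hxlt := x.isLt
      have hult := u.isLt
      have hun : n ≤ u.val := by omega
      set sx := 2 * m - 1 - (x.val - n) with hsx
      set su := 2 * m - 1 - (u.val - n) with hsu
      have hsult : su < s₁ := by omega
      have hsxge : s₁ ≤ sx := by omega
      have hx' : sChi n m ⟨n + sx, by omega⟩ = x := by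
        rw [sChi_right (show sx < 2 * m by omega)]
        exact Fin.ext (show n + (2 * m - 1 - sx) = x.val by omega)
      have hu' : sChi n m ⟨n + su, by omega⟩ = u := by
        rw [sChi_right (show su < 2 * m by omega)]
        exact Fin.ext (show n + (2 * m - 1 - su) = u.val by omega)
      rcases eq_or_lt_of_le hsxge with heq | hlt
      · -- x is the minimal-offset element of V; then 0 ~ u, contradiction
        have hxe : x = (⟨n + (2 * m - 1 - s₁), hPbound s₁⟩ : Fin (n + 2 * m)) :=
          Fin.ext (show x.val = n + (2 * m - 1 - s₁) by omega)
        have h0x : π.r ⟨0, h0lt⟩ x := by rw [hxe]; exact hs₁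
        exact hmin' u hu (π.trans' h0x hxu)
      · -- crossing argument
        obtain ⟨p1, p2, p3, p4, p5, p6, p7⟩ :
            (n + su < n + 2 * m) ∧ (n + s₁ < n + 2 * m) ∧ (n + sx < n + 2 * m) ∧
            (0 < n + su) ∧ (n + su < n + s₁) ∧ (n + s₁ < n + sx) ∧ (s₁ < 2 * m) := by
          omega
        have hac : π.r (sChi n m ⟨0, h0lt⟩) (sChi n m ⟨n + s₁, p2⟩) := by
          rw [sChi_left hn, sChi_right (show s₁ < 2 * m from p7)]
          exact hs₁
        have hbd : π.r (sChi n m ⟨n + su, p1⟩) (sChi n m ⟨n + sx, p3⟩) := by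
          rw [hu', hx']
          exact π.symm' hxu
        have hres := key 0 (n + su) (n + s₁) (n + sx) h0lt p1 p2 p3 p4 p5 p6 hac hbd
        rw [sChi_left hn, hu'] at hres
        exact hmin' u hu hres
    have hπclo : ∀ x y, π.r x y → x ∈ S → y ∈ S := by
      intro x y hxy hx
      obtain ⟨u, hu, hxu⟩ := hx
      exact ⟨u, hu, π.trans' (π.symm' hxy) hxu⟩
    have hσclo : ∀ x y, σ.r x y → x ∈ S → y ∈ S := by
      intro x y hxy hx
      have hfxy : (if x.val < n then x.val else n + (x.val - n) / 2)
          = (if y.val < n then y.val else n + (y.val - n) / 2) := hxy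
      by_cases hxn : x.val < n
      · have hyx : y = x := by
          by_cases hyn : y.val < n
          · rw [if_pos hxn, if_pos hyn] at hfxy
            exact Fin.ext (by omega)
          · rw [if_pos hxn, if_neg hyn] at hfxy
            exact absurd hfxy (by omega)
        rwa [hyx]
      · push_neg at hxn
        have hxT := hnoesc x hx hxn
        by_cases hyn : y.val < n
        · rw [if_neg (by omega), if_pos hyn] at hfxy
          exact absurd hfxy (by omega)
        · push_neg at hyn
          rw [if_neg (by omega), if_neg (by omega)] at hfxy
          exact ⟨y, by omega, π.refl' y⟩
    have htop : (π ⊔ σ).r ⟨0, by omega⟩ ⟨n + 2 * m - 1, by omega⟩ := by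
      rw [hjoin]; exact trivial
    have hiff := join_closed π σ S hπclo hσclo htop
    have h0S : (⟨0, by omega⟩ : Fin (n + 2 * m)) ∉ S := by
      rintro ⟨u, hu, h0u⟩
      exact hmin' u hu h0u
    refine h0S (hiff.mpr ⟨⟨n + 2 * m - 1, by omega⟩, ?_, π.refl' _⟩)
    show n + (2 * m - 1 - s₁) < n + 2 * m - 1
    omega
  have hmain : π.r ⟨0, by omega⟩ ⟨n + 2 * m - 1, by omega⟩ := by
    have he : (⟨n + (2 * m - 1 - s₁), hPbound s₁⟩ : Fin (n + 2 * m))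
        = ⟨n + 2 * m - 1, by omega⟩ :=
      Fin.ext (show n + (2 * m - 1 - s₁) = n + 2 * m - 1 by omega)
    rw [← he]; exact hs₁
  refine ⟨hmain, ?_⟩
  -- PART 2: all left nodes
  intro k hk
  have hklt : k < n + 2 * m := by omega
  rcases Nat.eq_zero_or_pos k with hk0 | hkpos
  · subst hk0; exact π.refl' _
  by_contra h0k
  set S : Set (Fin (n + 2 * m)) := {x | π.r x ⟨k, by omega⟩} with hS2def
  have hleft : ∀ x : Fin (n + 2 * m), x ∈ S → x.val < n := by
    intro x hx
    by_contra hnx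
    push_neg at hnx
    have hxlt := x.isLt
    have hxk : π.r x ⟨k, by omega⟩ := hx
    by_cases hxe : x.val = n + 2 * m - 1
    · have hxE : x = (⟨n + 2 * m - 1, hNlt⟩ : Fin (n + 2 * m)) := Fin.ext hxe
      have : π.r (⟨n + 2 * m - 1, hNlt⟩ : Fin (n + 2 * m)) ⟨k, hklt⟩ := by
        rw [← hxE]; exact hxk
      exact h0k (π.trans' hmain this)
    · set sx := 2 * m - 1 - (x.val - n) with hsx
      have hsx1 : 1 ≤ sx := by omega
      have hx' : sChi n m ⟨n + sx, by omega⟩ = x := by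
        rw [sChi_right (show sx < 2 * m by omega)]
        exact Fin.ext (show n + (2 * m - 1 - sx) = x.val by omega)
      have hac : π.r (sChi n m ⟨0, by omega⟩) (sChi n m ⟨n + 0, by omega⟩) := by
        rw [sChi_left hn, sChi_right (show (0:ℕ) < 2 * m by omega)]
        have he : (⟨n + (2 * m - 1 - 0), by omega⟩ : Fin (n + 2 * m))
            = ⟨n + 2 * m - 1, by omega⟩ :=
          Fin.ext (show n + (2 * m - 1 - 0) = n + 2 * m - 1 by omega)
        rw [he]; exact hmain
      have hbd : π.r (sChi n m ⟨k, by omega⟩) (sChi n m ⟨n + sx, by omega⟩) := by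
        rw [sChi_left hk, hx']
        exact π.symm' hxk
      obtain ⟨q1, q2, q3, q4, q5⟩ : (k < n + 2 * m) ∧ (n + 0 < n + 2 * m) ∧
          (n + sx < n + 2 * m) ∧ (k < n + 0) ∧ (n + 0 < n + sx) := by omega
      have hres := key 0 k (n + 0) (n + sx) h0lt q1 q2 q3 hkpos q4 q5 hac hbd
      rw [sChi_left hn, sChi_left hk] at hres
      exact h0k hres
  have hπclo : ∀ x y, π.r x y → x ∈ S → y ∈ S := by
    intro x y hxy hx
    have hx' : π.r x ⟨k, by omega⟩ := hx
    exact π.trans' (π.symm' hxy) hx'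
  have hσclo : ∀ x y, σ.r x y → x ∈ S → y ∈ S := by
    intro x y hxy hx
    have hxn := hleft x hx
    have hfxy : (if x.val < n then x.val else n + (x.val - n) / 2)
        = (if y.val < n then y.val else n + (y.val - n) / 2) := hxy
    have hyx : y = x := by
      by_cases hyn : y.val < n
      · rw [if_pos hxn, if_pos hyn] at hfxy
        exact Fin.ext (by omega)
      · rw [if_pos hxn, if_neg hyn] at hfxy
        exact absurd hfxy (by omega)
    rwa [hyx]
  have htop : (π ⊔ σ).r ⟨0, by omega⟩ ⟨k, by omega⟩ := by
    rw [hjoin]; exact trivial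
  have hiff := join_closed π σ S hπclo hσclo htop
  have h0S : (⟨0, by omega⟩ : Fin (n + 2 * m)) ∉ S := fun h => h0k h
  exact h0S (hiff.mpr (π.refl' _))
end

section
/- Let (A, E, ε) be a B-B-non-commutative probability space, χ : {1,…,n} → {ℓ,r}, and suppose X ∈ A_ℓ, Y ∈ A_r satisfy E(Z X Y Z') = E(Z Y X Z') for all Z, Z' ∈ A. If χ(k₀) = ℓ and χ(k₀+1) = r, and χ' is obtained from χ by swapping the values at k₀ and k₀+1, then the bi-free cumulants satisfy κ^B_χ(Z₁,…,Z_{k₀−1}, X, Y, Z_{k₀+2},…,Z_n) = κ^B_{χ'}(Z₁,…,Z_{k₀−1}, Y, X, Z_{k₀+2},…,Z_n) for all Z_k ∈ A_{χ(k)} (k ≠ k₀, k₀+1). -/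
open scoped Classical

noncomputable section

/-- The rank of an index in the `≺_χ` order: left indices (`χ = true`) in increasing order
first, followed by right indices (`χ = false`) in decreasing order.  So
`i ≺_χ j ↔ chiRank χ i < chiRank χ j`. -/
def chiRank {n : ℕ} (χ : Fin n → Bool) (i : Fin n) : ℕ :=
  if χ i = true then (Finset.univ.filter fun k : Fin n => χ k = true ∧ k < i).card
  else (Finset.univ.filter fun k : Fin n => χ k = true).card +
    (Finset.univ.filter fun k : Fin n => χ k = false ∧ i < k).card

/-- `π` is bi-non-crossing with respect to `χ`: it is non-crossing in the `≺_χ` order,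
i.e. `s_χ⁻¹ · π` is non-crossing. -/
def IsBNC {n : ℕ} (χ : Fin n → Bool) (π : Setoid (Fin n)) : Prop :=
  ∀ a b c d : Fin n, chiRank χ a < chiRank χ b → chiRank χ b < chiRank χ c →
    chiRank χ c < chiRank χ d → π.r a c → π.r b d → π.r a b

/-- `V` is a `χ`-interval: an interval with respect to the `≺_χ` order. -/
def ChiInterval {n : ℕ} (χ : Fin n → Bool) (V : Finset (Fin n)) : Prop :=
  ∀ x ∈ V, ∀ z ∈ V, ∀ y : Fin n,
    chiRank χ x ≤ chiRank χ y → chiRank χ y ≤ chiRank χ z → y ∈ V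

/-- `V` is a union of blocks of `π`. -/
def UnionOfBlocks {n : ℕ} (π : Setoid (Fin n)) (V : Finset (Fin n)) : Prop :=
  ∀ x ∈ V, ∀ y : Fin n, π.r x y → y ∈ V

/-- The increasing enumeration of `V ⊆ Fin n`, used to restrict tuples/partitions to `V`. -/
def restFin {n : ℕ} (V : Finset (Fin n)) : Fin V.card → Fin n :=
  fun a => ((V.orderIsoOfFin rfl) a).1

/-- A `B`-`B`-non-commutative probability space: a unital algebra `A`, a pair of commuting
injective unital homomorphisms `L : B → A` and `R : Bᵐᵒᵖ → A` (encoding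
`ε : B ⊗ B^op → A`, `L_b = ε(b⊗1)`, `R_b = ε(1⊗b)`), and a linear map `E : A → B` with
`E(ε(b₁⊗b₂)Z) = b₁ E(Z) b₂` and `E(Z L_b) = E(Z R_b)`. -/
structure BBNCPS (B : Type) [Ring B] [Algebra ℂ B] : Type 1 where
  A : Type
  [ringA : Ring A]
  [algA : Algebra ℂ A]
  L : B →ₐ[ℂ] A
  R : Bᵐᵒᵖ →ₐ[ℂ] A
  comm : ∀ (b₁ : B) (b₂ : Bᵐᵒᵖ), L b₁ * R b₂ = R b₂ * L b₁
  Linj : Function.Injective L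
  Rinj : Function.Injective R
  E : A →ₗ[ℂ] B
  E_mul : ∀ (b₁ b₂ : B) (Z : A), E (L b₁ * R (MulOpposite.op b₂) * Z) = b₁ * E Z * b₂
  E_swap : ∀ (Z : A) (b : B), E (Z * L b) = E (Z * R (MulOpposite.op b))

attribute [instance] BBNCPS.ringA BBNCPS.algA

variable {B : Type} [Ring B] [Algebra ℂ B]

/-- The tuple `Z` is compatible with the side function `χ`: entries with `χ k = ℓ` lie in
the left algebra `A_ℓ` (they commute with all `R_b`), entries with `χ k = r` lie in the
right algebra `A_r` (they commute with all `L_b`). -/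
def SideOK (P : BBNCPS B) {n : ℕ} (χ : Fin n → Bool) (Z : Fin n → P.A) : Prop :=
  ∀ k : Fin n,
    (χ k = true → ∀ b : B, Z k * P.R (MulOpposite.op b) = P.R (MulOpposite.op b) * Z k) ∧
    (χ k = false → ∀ b : B, Z k * P.L b = P.L b * Z k)

/-- `Eb` agrees with the moment function on full partitions:
`E^B_{1_χ}(Z₁,…,Z_n) = E(Z₁⋯Z_n)`. -/
def AnchorsTop (P : BBNCPS B)
    (Eb : (n : ℕ) → (Fin n → Bool) → Setoid (Fin n) → (Fin n → P.A) → B) : Prop :=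
  ∀ (n : ℕ) (χ : Fin n → Bool) (Z : Fin n → P.A),
    Eb n χ ⊤ Z = P.E (((List.finRange n).map Z).prod)

/-- Bi-multiplicativity, property (3): if `V₁,…,V_m` are unions of blocks of `π` and
`χ`-intervals partitioning `{1,…,n}`, ordered by `≺_χ`, then
`E^B_π(Z) = E^B_{π|V₁}(Z|V₁) ⋯ E^B_{π|V_m}(Z|V_m)`. -/
def FactorsOverIntervals (P : BBNCPS B)
    (Eb : (n : ℕ) → (Fin n → Bool) → Setoid (Fin n) → (Fin n → P.A) → B) : Prop :=
  ∀ (n : ℕ) (χ : Fin n → Bool) (π : Setoid (Fin n)) (Z : Fin n → P.A),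
    SideOK P χ Z → IsBNC χ π →
    ∀ (m : ℕ) (Vs : Fin m → Finset (Fin n)),
      (∀ k : Fin n, ∃! i : Fin m, k ∈ Vs i) →
      (∀ i, (Vs i).Nonempty) →
      (∀ i, UnionOfBlocks π (Vs i)) →
      (∀ i, ChiInterval χ (Vs i)) →
      (∀ i j : Fin m, i < j → ∀ x ∈ Vs i, ∀ y ∈ Vs j, chiRank χ x < chiRank χ y) →
      Eb n χ π Z =
        ((List.finRange m).map fun i =>
          Eb (Vs i).card (χ ∘ restFin (Vs i)) (Setoid.comap (restFin (Vs i)) π)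
            (Z ∘ restFin (Vs i))).prod

/-- Bi-multiplicativity, property (4): if `V, W` are unions of blocks of `π` partitioning
`{1,…,n}`, `V` is a `χ`-interval, the `≺_χ`-minimum and `≺_χ`-maximum lie in `W`, and `p`
is the `≺_χ`-largest element of `W` preceding `V`, then `E^B_π(Z)` is obtained by evaluating
`E^B_{π|V}(Z|V)`, multiplying it into position `p` (as `Z_p L_{·}` if `χ(p) = ℓ`, as
`R_{·} Z_p` if `χ(p) = r`), and applying `E^B_{π|W}` to the resulting restricted tuple. -/
def NestsOverIntervals (P : BBNCPS B)
    (Eb : (n : ℕ) → (Fin n → Bool) → Setoid (Fin n) → (Fin n → P.A) → B) : Prop :=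
  ∀ (n : ℕ) (χ : Fin n → Bool) (π : Setoid (Fin n)) (Z : Fin n → P.A),
    SideOK P χ Z → IsBNC χ π →
    ∀ (V W : Finset (Fin n)), V.Nonempty → W.Nonempty → Disjoint V W →
      V ∪ W = Finset.univ → UnionOfBlocks π V → UnionOfBlocks π W → ChiInterval χ V →
      (∃ w ∈ W, ∀ v ∈ V, chiRank χ v < chiRank χ w) →
      ∀ p : Fin n, p ∈ W → (∀ v ∈ V, chiRank χ p < chiRank χ v) →
        (∀ w ∈ W, (∀ v ∈ V, chiRank χ w < chiRank χ v) → chiRank χ w ≤ chiRank χ p) →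
        Eb n χ π Z =
          Eb W.card (χ ∘ restFin W) (Setoid.comap (restFin W) π)
            ((Function.update Z p
              (if χ p then
                Z p * P.L (Eb V.card (χ ∘ restFin V) (Setoid.comap (restFin V) π)
                  (Z ∘ restFin V))
               else
                P.R (MulOpposite.op (Eb V.card (χ ∘ restFin V)
                  (Setoid.comap (restFin V) π) (Z ∘ restFin V))) * Z p)) ∘ restFin W)

/-- `μ` is the bi-non-crossing Möbius function: it vanishes on non-refinements and
satisfies the defining recursions on each lattice `BNC(χ)`. -/
def MoebiusBNC (μ : (n : ℕ) → (Fin n → Bool) → Setoid (Fin n) → Setoid (Fin n) → ℂ) :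
    Prop :=
  (∀ (n : ℕ) (χ : Fin n → Bool) (π σ : Setoid (Fin n)), ¬ π ≤ σ → μ n χ π σ = 0) ∧
  (∀ (n : ℕ) (χ : Fin n → Bool) (π σ : Setoid (Fin n)),
    IsBNC χ π → IsBNC χ σ → π ≤ σ →
    (∑ᶠ τ ∈ {τ : Setoid (Fin n) | IsBNC χ τ ∧ π ≤ τ ∧ τ ≤ σ}, μ n χ τ σ)
      = if π = σ then 1 else 0) ∧
  (∀ (n : ℕ) (χ : Fin n → Bool) (π σ : Setoid (Fin n)),
    IsBNC χ π → IsBNC χ σ → π ≤ σ →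
    (∑ᶠ τ ∈ {τ : Setoid (Fin n) | IsBNC χ τ ∧ π ≤ τ ∧ τ ≤ σ}, μ n χ π τ)
      = if π = σ then 1 else 0)


instance instFinSetoidFin (n : ℕ) : Finite (Setoid (Fin n)) := by
  have hinj : Function.Injective (fun s : Setoid (Fin n) => s.r) := by
    intro s t h
    exact Setoid.ext fun a b => iff_of_eq (congrFun (congrFun h a) b)
  exact Finite.of_injective _ hinj

section Rank
variable {m : ℕ}

lemma filt_mono {p q : Fin m → Prop} [DecidablePred p] [DecidablePred q] (h : ∀ k, p k → q k) :
    (Finset.univ.filter p).card ≤ (Finset.univ.filter q).card :=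
  Finset.card_le_card (fun k hk => by
    simp only [Finset.mem_filter, Finset.mem_univ, true_and] at *; exact h k hk)

lemma filt_strict {p q : Fin m → Prop} [DecidablePred p] [DecidablePred q] (h : ∀ k, p k → q k) (x : Fin m)
    (hq : q x) (hp : ¬ p x) :
    (Finset.univ.filter p).card < (Finset.univ.filter q).card := by
  apply Finset.card_lt_card
  constructor
  · intro k hk; simp only [Finset.mem_filter, Finset.mem_univ, true_and] at *; exact h k hk
  · intro hsub
    have := hsub (by simp only [Finset.mem_filter, Finset.mem_univ, true_and]; exact hq)
    simp only [Finset.mem_filter, Finset.mem_univ, true_and] at this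
    exact hp this

lemma chiRank_lt_iff (χ : Fin m → Bool) (x y : Fin m) :
    chiRank χ x < chiRank χ y ↔
      ((χ x = true ∧ χ y = true ∧ x < y) ∨ (χ x = true ∧ χ y = false) ∨
        (χ x = false ∧ χ y = false ∧ y < x)) := by
  unfold chiRank
  rcases hx : χ x <;> rcases hy : χ y <;>
    simp only [hx, hy, if_true, if_false, Bool.false_eq_true, Bool.true_eq_false,
      false_and, and_false, true_and, and_true, false_or, or_false, if_neg, if_pos,
      not_false_iff]
  · -- x false, y false : LHS ↔ y < x
    constructor
    · intro h
      by_contra hyx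
      have hxy : x ≤ y := le_of_not_gt hyx
      have := filt_mono (p := fun k : Fin m => χ k = false ∧ y < k)
        (q := fun k : Fin m => χ k = false ∧ x < k)
        (fun k hk => ⟨hk.1, lt_of_le_of_lt hxy hk.2⟩)
      omega
    · intro h
      have := filt_strict (p := fun k : Fin m => χ k = false ∧ x < k)
        (q := fun k : Fin m => χ k = false ∧ y < k)
        (fun k hk => ⟨hk.1, lt_trans h hk.2⟩) x ⟨hx, h⟩ (by simp)
      omega
  · -- x false, y true : LHS false
    constructor
    · intro h
      have := filt_strict (p := fun k : Fin m => χ k = true ∧ k < y)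
        (q := fun k : Fin m => χ k = true) (fun k hk => hk.1) y hy (by simp)
      omega
    · intro h; exact absurd h (by simp)
  · -- x true, y false : always true
    refine iff_true_intro ?_
    have := filt_strict (p := fun k : Fin m => χ k = true ∧ k < x)
      (q := fun k : Fin m => χ k = true) (fun k hk => hk.1) x hx (by simp)
    omega
  · -- both true : LHS ↔ x < y
    constructor
    · intro h
      by_contra hyx
      have hxy : y ≤ x := le_of_not_gt hyx
      have := filt_mono (p := fun k : Fin m => χ k = true ∧ k < y)
        (q := fun k : Fin m => χ k = true ∧ k < x)
        (fun k hk => ⟨hk.1, lt_of_lt_of_le hk.2 hxy⟩)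
      omega
    · intro h
      exact filt_strict (p := fun k : Fin m => χ k = true ∧ k < x)
        (q := fun k : Fin m => χ k = true ∧ k < y)
        (fun k hk => ⟨hk.1, lt_trans hk.2 h⟩) x ⟨hx, h⟩ (by simp)

lemma chiRank_lt_or (χ : Fin m → Bool) {x y : Fin m} (h : x ≠ y) :
    chiRank χ x < chiRank χ y ∨ chiRank χ y < chiRank χ x := by
  rcases lt_or_gt_of_ne h with h' | h' <;> rcases hx : χ x <;> rcases hy : χ y <;>
    simp only [chiRank_lt_iff, hx, hy] <;> tauto

lemma chiRank_injective (χ : Fin m → Bool) : Function.Injective (chiRank χ) := by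
  intro x y h
  by_contra hne
  rcases chiRank_lt_or χ hne with h' | h' <;> omega

lemma chiRank_le_iff (χ : Fin m → Bool) (x y : Fin m) :
    chiRank χ x ≤ chiRank χ y ↔ x = y ∨ chiRank χ x < chiRank χ y := by
  constructor
  · intro h
    by_cases hxy : x = y
    · exact Or.inl hxy
    · rcases chiRank_lt_or χ hxy with h' | h'
      · exact Or.inr h'
      · omega
  · rintro (rfl | h); exacts [le_rfl, le_of_lt h]

end Rank

section Swap
variable {m : ℕ} {a b : Fin m}

lemma swap_lt_iff (hab : (a : ℕ) + 1 = b) {x y : Fin m}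
    (h1 : ¬(x = a ∧ y = b)) (h2 : ¬(x = b ∧ y = a)) :
    Equiv.swap a b x < Equiv.swap a b y ↔ x < y := by
  simp only [Equiv.swap_apply_def]
  split_ifs <;> simp only [Fin.lt_def, Fin.ext_iff, not_and] at * <;> omega

lemma chiRank_swap_lt (hab : (a : ℕ) + 1 = b) {χ : Fin m → Bool} (hχ : χ a ≠ χ b)
    (x y : Fin m) :
    chiRank (χ ∘ Equiv.swap a b) (Equiv.swap a b x) <
        chiRank (χ ∘ Equiv.swap a b) (Equiv.swap a b y) ↔
      chiRank χ x < chiRank χ y := by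
  rw [chiRank_lt_iff, chiRank_lt_iff]
  simp only [Function.comp_apply, Equiv.swap_apply_self]
  rcases hx : χ x <;> rcases hy : χ y <;>
    simp only [Bool.false_eq_true, Bool.true_eq_false, false_and, and_false, true_and,
      and_true, false_or, or_false, or_self]
  all_goals try rfl
  all_goals
    apply swap_lt_iff hab <;>
      (rintro ⟨rfl, rfl⟩; rw [hx, hy] at hχ;
       first
         | exact hχ rfl
         | exact hχ.symm rfl)

lemma comap_comap {α β γ} (f : α → β) (g : β → γ) (σ : Setoid γ) :
    Setoid.comap f (Setoid.comap g σ) = Setoid.comap (g ∘ f) σ :=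
  Setoid.ext fun _ _ => Iff.rfl

lemma comap_congr {α β} {f g : α → β} (h : f = g) (σ : Setoid β) :
    Setoid.comap f σ = Setoid.comap g σ := by rw [h]

lemma comap_swap_swap (σ : Setoid (Fin m)) :
    Setoid.comap (Equiv.swap a b) (Setoid.comap (Equiv.swap a b) σ) = σ :=
  Setoid.ext fun x y => by
    show σ.r (Equiv.swap a b (Equiv.swap a b x)) (Equiv.swap a b (Equiv.swap a b y)) ↔ _
    rw [Equiv.swap_apply_self, Equiv.swap_apply_self]

lemma comap_top {α β} (f : α → β) : Setoid.comap f (⊤ : Setoid β) = ⊤ := by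
  apply Setoid.ext; intro x y
  constructor
  · intro _; trivial
  · intro _; show (⊤ : Setoid β).r (f x) (f y); trivial

lemma isBNC_comap_swap (hab : (a : ℕ) + 1 = b) {χ : Fin m → Bool} (hχ : χ a ≠ χ b)
    {σ : Setoid (Fin m)} (hσ : IsBNC χ σ) :
    IsBNC (χ ∘ Equiv.swap a b) (Setoid.comap (Equiv.swap a b) σ) := by
  intro p q r t h1 h2 h3 hpr hqt
  set s := Equiv.swap a b with hs
  have e : ∀ u : Fin m, s (s u) = u := fun u => Equiv.swap_apply_self a b u
  have k1 : chiRank χ (s p) < chiRank χ (s q) := by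
    rw [← chiRank_swap_lt hab hχ (s p) (s q), e p, e q]; exact h1
  have k2 : chiRank χ (s q) < chiRank χ (s r) := by
    rw [← chiRank_swap_lt hab hχ (s q) (s r), e q, e r]; exact h2
  have k3 : chiRank χ (s r) < chiRank χ (s t) := by
    rw [← chiRank_swap_lt hab hχ (s r) (s t), e r, e t]; exact h3
  exact hσ (s p) (s q) (s r) (s t) k1 k2 k3 hpr hqt

end Swap

section Rest
variable {m : ℕ}

lemma restFin_mem (V : Finset (Fin m)) (i : Fin V.card) : restFin V i ∈ V :=
  (V.orderIsoOfFin rfl i).2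

lemma restFin_strictMono (V : Finset (Fin m)) : StrictMono (restFin V) := by
  intro i j h
  exact (V.orderIsoOfFin rfl).lt_iff_lt.mpr h

lemma restFin_injective (V : Finset (Fin m)) : Function.Injective (restFin V) :=
  (restFin_strictMono V).injective

lemma restFin_surj (V : Finset (Fin m)) {x : Fin m} (hx : x ∈ V) :
    ∃ i, restFin V i = x := by
  refine ⟨(V.orderIsoOfFin rfl).symm ⟨x, hx⟩, ?_⟩
  show ((V.orderIsoOfFin rfl) ((V.orderIsoOfFin rfl).symm ⟨x, hx⟩) : Fin m) = x
  rw [OrderIso.apply_symm_apply]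

lemma restFin_unique (V : Finset (Fin m)) {f : Fin V.card → Fin m}
    (hmem : ∀ i, f i ∈ V) (hmono : StrictMono f) : f = restFin V := by
  have := Finset.orderEmbOfFin_unique (s := V) (k := V.card) rfl hmem hmono
  rw [this]
  funext i
  rw [show restFin V i = V.orderEmbOfFin rfl i from rfl]

lemma restFin_lt_iff (V : Finset (Fin m)) {i j : Fin V.card} :
    restFin V i < restFin V j ↔ i < j :=
  (restFin_strictMono V).lt_iff_lt

lemma chiRank_restFin_lt (χ : Fin m → Bool) (V : Finset (Fin m)) (i j : Fin V.card) :
    chiRank (χ ∘ restFin V) i < chiRank (χ ∘ restFin V) j ↔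
      chiRank χ (restFin V i) < chiRank χ (restFin V j) := by
  rw [chiRank_lt_iff, chiRank_lt_iff]
  simp only [Function.comp_apply, restFin_lt_iff]

lemma isBNC_restFin (χ : Fin m → Bool) (V : Finset (Fin m)) {σ : Setoid (Fin m)}
    (hσ : IsBNC χ σ) : IsBNC (χ ∘ restFin V) (Setoid.comap (restFin V) σ) := by
  intro p q r t h1 h2 h3 hpr hqt
  exact hσ (restFin V p) (restFin V q) (restFin V r) (restFin V t)
    ((chiRank_restFin_lt χ V p q).mp h1) ((chiRank_restFin_lt χ V q r).mp h2)
    ((chiRank_restFin_lt χ V r t).mp h3) hpr hqt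

/-- image under swap -/
lemma mem_image_swap {a b : Fin m} (U : Finset (Fin m)) (x : Fin m) :
    x ∈ U.image (Equiv.swap a b) ↔ Equiv.swap a b x ∈ U := by
  rw [Finset.mem_image]
  constructor
  · rintro ⟨y, hy, rfl⟩; rwa [Equiv.swap_apply_self]
  · intro hx; exact ⟨_, hx, Equiv.swap_apply_self a b x⟩

lemma card_image_swap {a b : Fin m} (U : Finset (Fin m)) :
    (U.image (Equiv.swap a b)).card = U.card :=
  Finset.card_image_of_injective U (Equiv.swap a b).injective

/-- If not both a and b lie in U, the swap is order preserving on U. -/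
lemma swap_mono_on {a b : Fin m} (hab : (a : ℕ) + 1 = b) (U : Finset (Fin m))
    (hU : ¬(a ∈ U ∧ b ∈ U)) {x y : Fin m} (hx : x ∈ U) (hy : y ∈ U) (h : x < y) :
    Equiv.swap a b x < Equiv.swap a b y := by
  have h1 : ¬(x = a ∧ y = b) := by rintro ⟨rfl, rfl⟩; exact hU ⟨hx, hy⟩
  have h2 : ¬(x = b ∧ y = a) := by
    rintro ⟨rfl, rfl⟩
    have := Fin.lt_def.mp h; omega
  exact (swap_lt_iff hab h1 h2).mpr h

lemma restFin_image_swap {a b : Fin m} (hab : (a : ℕ) + 1 = b) (U : Finset (Fin m))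
    (hU : ¬(a ∈ U ∧ b ∈ U)) :
    restFin (U.image (Equiv.swap a b)) =
      (Equiv.swap a b) ∘ restFin U ∘ Fin.cast (card_image_swap U) := by
  refine (restFin_unique _ ?_ ?_).symm
  · intro i
    rw [mem_image_swap]
    show Equiv.swap a b (Equiv.swap a b (restFin U (Fin.cast _ i))) ∈ U
    rw [Equiv.swap_apply_self]
    exact restFin_mem U _
  · intro i j h
    exact swap_mono_on hab U hU (restFin_mem U _) (restFin_mem U _)
      (restFin_strictMono U (by exact h))

/-- congruence lemma for Eb across an index cast -/
lemma Eb_cast {B : Type} [Ring B] [Algebra ℂ B] {P : BBNCPS B}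
    (Eb : (n : ℕ) → (Fin n → Bool) → Setoid (Fin n) → (Fin n → P.A) → B)
    {c₁ c₂ : ℕ} (h : c₁ = c₂) (χ₂ : Fin c₂ → Bool) (σ₂ : Setoid (Fin c₂))
    (Z₂ : Fin c₂ → P.A) :
    Eb c₁ (χ₂ ∘ Fin.cast h) (Setoid.comap (Fin.cast h) σ₂) (Z₂ ∘ Fin.cast h) =
      Eb c₂ χ₂ σ₂ Z₂ := by
  subst h
  have e1 : χ₂ ∘ Fin.cast rfl = χ₂ := by funext i; rfl
  have e2 : Setoid.comap (Fin.cast rfl) σ₂ = σ₂ := Setoid.ext fun x y => by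
    show σ₂.r (Fin.cast rfl x) (Fin.cast rfl y) ↔ σ₂.r x y
    rfl
  have e3 : Z₂ ∘ Fin.cast rfl = Z₂ := by funext i; rfl
  rw [e1, e2, e3]

end Rest

section BlockD
variable {m : ℕ}

lemma exists_interval_block (χ : Fin m → Bool) (σ : Setoid (Fin m)) (hσ : IsBNC χ σ)
    (hm : 0 < m) :
    ∃ x₀ : Fin m, ChiInterval χ (Finset.univ.filter fun y => σ.r x₀ y) := by
  classical
  have rtrans : ∀ {x y z : Fin m}, σ.r x y → σ.r y z → σ.r x z :=
    fun h1 h2 => σ.iseqv.trans h1 h2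
  have rsymm : ∀ {x y : Fin m}, σ.r x y → σ.r y x := fun h => σ.iseqv.symm h
  have hBne : ∀ x : Fin m, (Finset.univ.filter fun y => σ.r x y).Nonempty :=
    fun x => ⟨x, by simp only [Finset.mem_filter, Finset.mem_univ, true_and]; exact σ.iseqv.refl x⟩
  set d : Fin m → ℕ := fun x =>
    (((Finset.univ.filter fun y => σ.r x y).image (chiRank χ)).max' ((hBne x).image (chiRank χ))) -
      (((Finset.univ.filter fun y => σ.r x y).image (chiRank χ)).min' ((hBne x).image (chiRank χ))) with hd
  obtain ⟨x₀, -, hx₀⟩ := Finset.exists_min_image Finset.univ d ⟨⟨0, hm⟩, Finset.mem_univ _⟩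
  refine ⟨x₀, ?_⟩
  set V := Finset.univ.filter fun y => σ.r x₀ y with hV
  intro u hu z hz y h1 h2
  by_contra hy
  have memV : ∀ w, w ∈ V ↔ σ.r x₀ w := by
    intro w; simp only [hV, Finset.mem_filter, Finset.mem_univ, true_and]
  -- strict inequalities
  have h1' : (chiRank χ) u < (chiRank χ) y := by
    rcases (chiRank_le_iff χ u y).mp h1 with rfl | h
    · exact absurd hu hy
    · exact h
  have h2' : (chiRank χ) y < (chiRank χ) z := by
    rcases (chiRank_le_iff χ y z).mp h2 with rfl | h
    · exact absurd hz hy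
    · exact h
  obtain ⟨mB, hmB, hmBmin⟩ := Finset.exists_min_image V (chiRank χ) (hBne x₀)
  obtain ⟨MB, hMB, hMBmax⟩ := Finset.exists_max_image V (chiRank χ) (hBne x₀)
  have hmBy : (chiRank χ) mB < (chiRank χ) y := lt_of_le_of_lt (hmBmin u hu) h1'
  have hyMB : (chiRank χ) y < (chiRank χ) MB := lt_of_lt_of_le h2' (hMBmax z hz)
  have hrmM : σ.r mB MB := rtrans (rsymm ((memV mB).mp hmB)) ((memV MB).mp hMB)
  -- every element of the block of y lies strictly between
  have key : ∀ w, σ.r y w → (chiRank χ) mB < (chiRank χ) w ∧ (chiRank χ) w < (chiRank χ) MB := by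
    intro w hw
    have hwV : w ∉ V := by
      intro hwV
      exact hy ((memV y).mpr (rtrans ((memV w).mp hwV) (rsymm hw)))
    have hwmB : w ≠ mB := fun h => hwV (h ▸ hmB)
    have hwMB : w ≠ MB := fun h => hwV (h ▸ hMB)
    constructor
    · by_contra hle
      have hwlt : (chiRank χ) w < (chiRank χ) mB := by
        rcases chiRank_lt_or χ hwmB with h | h
        · exact h
        · omega
      have := hσ w mB y MB hwlt hmBy hyMB (rsymm hw) hrmM
      exact hy ((memV y).mpr (rtrans ((memV mB).mp hmB) (rtrans (rsymm this) (rsymm hw))))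
    · by_contra hle
      have hwlt : (chiRank χ) MB < (chiRank χ) w := by
        rcases chiRank_lt_or χ hwMB with h | h
        · omega
        · exact h
      have := hσ mB y MB w hmBy hyMB hwlt hrmM hw
      exact hy ((memV y).mpr (rtrans ((memV mB).mp hmB) this))
  -- d y < d x₀, contradicting minimality
  have hmax : (((Finset.univ.filter fun w => σ.r y w).image (chiRank χ)).max'
      ((hBne y).image (chiRank χ))) ≤ chiRank χ MB - 1 := by
    apply Finset.max'_le
    intro v hv
    obtain ⟨w, hw, rfl⟩ := Finset.mem_image.mp hv
    have := (key w (by simpa using hw)).2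
    omega
  have hmin : chiRank χ mB + 1 ≤ (((Finset.univ.filter fun w => σ.r y w).image (chiRank χ)).min'
      ((hBne y).image (chiRank χ))) := by
    apply Finset.le_min'
    intro v hv
    obtain ⟨w, hw, rfl⟩ := Finset.mem_image.mp hv
    have := (key w (by simpa using hw)).1
    omega
  have e1 : (((Finset.univ.filter fun y => σ.r x₀ y).image (chiRank χ)).max'
      ((hBne x₀).image (chiRank χ))) = chiRank χ MB := by
    apply le_antisymm
    · apply Finset.max'_le
      intro v hv
      obtain ⟨w, hw, rfl⟩ := Finset.mem_image.mp hv
      exact hMBmax w hw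
    · exact Finset.le_max' _ _ (Finset.mem_image_of_mem _ hMB)
  have e2 : (((Finset.univ.filter fun y => σ.r x₀ y).image (chiRank χ)).min'
      ((hBne x₀).image (chiRank χ))) = chiRank χ mB := by
    apply le_antisymm
    · exact Finset.min'_le _ _ (Finset.mem_image_of_mem _ hmB)
    · apply Finset.le_min'
      intro v hv
      obtain ⟨w, hw, rfl⟩ := Finset.mem_image.mp hv
      exact hmBmin w hw
  have hdx : d x₀ = chiRank χ MB - chiRank χ mB := by
    show (((Finset.univ.filter fun y => σ.r x₀ y).image (chiRank χ)).max'
        ((hBne x₀).image (chiRank χ))) -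
      (((Finset.univ.filter fun y => σ.r x₀ y).image (chiRank χ)).min'
        ((hBne x₀).image (chiRank χ))) = _
    rw [e1, e2]
  have hdy : d y ≤ chiRank χ MB - 1 - (chiRank χ mB + 1) := by
    show (((Finset.univ.filter fun w => σ.r y w).image (chiRank χ)).max'
        ((hBne y).image (chiRank χ))) -
      (((Finset.univ.filter fun w => σ.r y w).image (chiRank χ)).min'
        ((hBne y).image (chiRank χ))) ≤ _
    omega
  have := hx₀ y (Finset.mem_univ y)
  omega

end BlockD

section Top

lemma prod_split {A : Type*} [Monoid A] (l : List A) (a : ℕ) (h : a + 1 < l.length) :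
    l.prod = (l.take a).prod * l[a] * l[a + 1] * (l.drop (a + 2)).prod := by
  conv_lhs => rw [← List.take_append_drop a l,
    List.drop_eq_getElem_cons (show a < l.length by omega),
    List.drop_eq_getElem_cons (show a + 1 < l.length from h)]
  rw [List.prod_append, List.prod_cons, List.prod_cons, ← mul_assoc, ← mul_assoc]

lemma prod_map_swap_split {A : Type*} [Monoid A] {m : ℕ} (a b : Fin m)
    (hab : (a : ℕ) + 1 = b) (Z : Fin m → A) :
    (((List.finRange m).map Z).prod =
      ((((List.finRange m).map Z).take a).prod * Z a * Z b *
        (((List.finRange m).map Z).drop (a + 2)).prod)) ∧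
    (((List.finRange m).map (Z ∘ Equiv.swap a b)).prod =
      ((((List.finRange m).map Z).take a).prod * Z b * Z a *
        (((List.finRange m).map Z).drop (a + 2)).prod)) := by
  have hb : (b : ℕ) < m := b.isLt
  have hlen : ((List.finRange m).map Z).length = m := by simp
  have hlen' : ((List.finRange m).map (Z ∘ Equiv.swap a b)).length = m := by simp
  have key : ∀ (W : Fin m → A), ((List.finRange m).map W).prod =
      ((((List.finRange m).map W).take a).prod * W a * W b *
        (((List.finRange m).map W).drop (a + 2)).prod) := by
    intro W
    have hlenW : ((List.finRange m).map W).length = m := by simp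
    rw [prod_split ((List.finRange m).map W) a (by omega)]
    simp only [List.getElem_map, List.getElem_finRange, Fin.eta]
    congr 2
    all_goals
      first
        | rfl
        | exact congrArg W (Fin.ext hab)
        | (apply congrArg W; apply Fin.ext; simp [hab])
  constructor
  · exact key Z
  · rw [key (Z ∘ Equiv.swap a b)]
    have e1 : ((List.finRange m).map (Z ∘ Equiv.swap a b)).take a =
        ((List.finRange m).map Z).take a := by
      apply List.ext_getElem
      · simp
      · intro i h1 h2
        simp only [List.getElem_take, List.getElem_map, List.getElem_finRange,
          Function.comp_apply]
        have hia : i < (a : ℕ) := by simp at h1; omega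
        congr 1
        apply Equiv.swap_apply_of_ne_of_ne
        · exact Fin.ne_of_val_ne (by simpa using Nat.ne_of_lt hia)
        · exact Fin.ne_of_val_ne (by simp; omega)
    have e2 : ((List.finRange m).map (Z ∘ Equiv.swap a b)).drop (a + 2) =
        ((List.finRange m).map Z).drop (a + 2) := by
      apply List.ext_getElem
      · simp
      · intro i h1 h2
        simp only [List.getElem_drop, List.getElem_map, List.getElem_finRange,
          Function.comp_apply]
        congr 1
        apply Equiv.swap_apply_of_ne_of_ne
        · exact Fin.ne_of_val_ne (by simp; omega)
        · exact Fin.ne_of_val_ne (by simp; omega)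
    have e3 : (Z ∘ Equiv.swap a b) a = Z b := by simp
    have e4 : (Z ∘ Equiv.swap a b) b = Z a := by simp
    rw [e1, e2, e3, e4]

end Top

section LemC

variable {B : Type} [Ring B] [Algebra ℂ B]

theorem lemC (P : BBNCPS B)
    (Eb : (n : ℕ) → (Fin n → Bool) → Setoid (Fin n) → (Fin n → P.A) → B)
    (hTop : AnchorsTop P Eb) (hFac : FactorsOverIntervals P Eb)
    (hNest : NestsOverIntervals P Eb) (m : ℕ) :
    ∀ (a b : Fin m), (a : ℕ) + 1 = (b : ℕ) → ∀ (χ : Fin m → Bool), χ a = true →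
    χ b = false → ∀ σ : Setoid (Fin m), IsBNC χ σ → ∀ Z : Fin m → P.A, SideOK P χ Z →
    (∀ Zl Zr, P.E (Zl * Z a * Z b * Zr) = P.E (Zl * Z b * Z a * Zr)) →
    Eb m χ σ Z = Eb m (χ ∘ Equiv.swap a b) (Setoid.comap (Equiv.swap a b) σ)
      (Z ∘ Equiv.swap a b) := by
  induction m using Nat.strong_induction_on with
  | _ m IH =>
  intro a b hab χ hχa hχb σ hσ Z hZ hc
  set s := Equiv.swap a b with hs
  have hss : ∀ x, s (s x) = x := fun x => Equiv.swap_apply_self a b x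
  have hne : χ a ≠ χ b := by rw [hχa, hχb]; simp
  have hab' : a ≠ b := Fin.ne_of_val_ne (by omega)
  have rank1 : ∀ x y, chiRank (χ ∘ s) (s x) < chiRank (χ ∘ s) (s y) ↔
      chiRank χ x < chiRank χ y := chiRank_swap_lt hab hne
  have rank2 : ∀ x y, chiRank (χ ∘ s) x < chiRank (χ ∘ s) y ↔
      chiRank χ (s x) < chiRank χ (s y) := by
    intro x y
    have := rank1 (s x) (s y)
    rwa [hss, hss] at this
  have hσ' : IsBNC (χ ∘ s) (Setoid.comap s σ) := isBNC_comap_swap hab hne hσ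
  have hZ' : SideOK P (χ ∘ s) (Z ∘ s) := fun k =>
    ⟨fun h bb => (hZ (s k)).1 h bb, fun h bb => (hZ (s k)).2 h bb⟩
  -- the key transport helper
  have H : ∀ (U : Finset (Fin m)), U.card < m → ∀ (Z₁ : Fin m → P.A), SideOK P χ Z₁ →
      (∀ Zl Zr, P.E (Zl * Z₁ a * Z₁ b * Zr) = P.E (Zl * Z₁ b * Z₁ a * Zr)) →
      Eb (U.image s).card ((χ ∘ s) ∘ restFin (U.image s))
          (Setoid.comap (restFin (U.image s)) (Setoid.comap s σ))
          ((Z₁ ∘ s) ∘ restFin (U.image s)) =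
        Eb U.card (χ ∘ restFin U) (Setoid.comap (restFin U) σ) (Z₁ ∘ restFin U) := by
    intro U hUm Z₁ hZ₁ hc₁
    by_cases hpair : a ∈ U ∧ b ∈ U
    · -- both endpoints in U : use the induction hypothesis
      have himg : U.image s = U := by
        apply Finset.eq_of_subset_of_card_le
        · intro x hx
          obtain ⟨y, hy, rfl⟩ := Finset.mem_image.mp hx
          by_cases hya : y = a
          · subst hya; rw [hs, Equiv.swap_apply_left]; exact hpair.2
          · by_cases hyb : y = b
            · subst hyb; rw [hs, Equiv.swap_apply_right]; exact hpair.1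
            · rw [hs, Equiv.swap_apply_of_ne_of_ne hya hyb]; exact hy
        · rw [card_image_swap]
      obtain ⟨j, hj⟩ := restFin_surj U hpair.1
      obtain ⟨j', hj'⟩ := restFin_surj U hpair.2
      have hjlt : j < j' := by
        rw [← restFin_lt_iff U, hj, hj']
        exact Fin.lt_def.mpr (by omega)
      have hjj' : (j : ℕ) + 1 = (j' : ℕ) := by
        by_contra hnoteq
        have h2 : (j : ℕ) + 1 < (j' : ℕ) := by
          have := Fin.lt_def.mp hjlt; omega
        have hi : ((j : ℕ) + 1) < U.card := lt_trans h2 j'.isLt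
        have k1 := restFin_strictMono U (show j < ⟨(j : ℕ) + 1, hi⟩ from
          Fin.lt_def.mpr (by simp))
        have k2 := restFin_strictMono U (show (⟨(j : ℕ) + 1, hi⟩ : Fin U.card) < j' from
          Fin.lt_def.mpr (by simpa using h2))
        rw [hj] at k1
        rw [hj'] at k2
        have := Fin.lt_def.mp k1
        have := Fin.lt_def.mp k2
        omega
      set sj := Equiv.swap j j' with hsj
      have hcr : restFin U ∘ sj = s ∘ restFin U := by
        funext i
        by_cases hij : i = j
        · subst hij
          simp only [Function.comp_apply, hsj, Equiv.swap_apply_left, hj']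
          rw [hj, hs, Equiv.swap_apply_left]
        · by_cases hij' : i = j'
          · subst hij'
            simp only [Function.comp_apply, hsj, Equiv.swap_apply_right, hj]
            rw [hj', hs, Equiv.swap_apply_right]
          · have hrn : restFin U i ≠ a := fun h =>
              hij (restFin_injective U (by rw [h, hj]))
            have hrn' : restFin U i ≠ b := fun h =>
              hij' (restFin_injective U (by rw [h, hj']))
            simp only [Function.comp_apply, hsj, Equiv.swap_apply_of_ne_of_ne hij hij']
            rw [hs, Equiv.swap_apply_of_ne_of_ne hrn hrn']
      have hIH := IH U.card hUm j j' hjj' (χ ∘ restFin U)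
        (by show χ (restFin U j) = true; rw [hj]; exact hχa)
        (by show χ (restFin U j') = false; rw [hj']; exact hχb)
        (Setoid.comap (restFin U) σ) (isBNC_restFin χ U hσ)
        (Z₁ ∘ restFin U)
        (fun k => ⟨fun h bb => (hZ₁ (restFin U k)).1 h bb,
          fun h bb => (hZ₁ (restFin U k)).2 h bb⟩)
        (by
          intro Zl Zr
          show P.E (Zl * Z₁ (restFin U j) * Z₁ (restFin U j') * Zr) =
            P.E (Zl * Z₁ (restFin U j') * Z₁ (restFin U j) * Zr)
          rw [hj, hj']
          exact hc₁ Zl Zr)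
      rw [himg, hIH]
      have e1 : (χ ∘ restFin U) ∘ sj = (χ ∘ s) ∘ restFin U := by
        funext i
        show χ (restFin U (sj i)) = χ (s (restFin U i))
        exact congrArg χ (congrFun hcr i)
      have e2 : Setoid.comap sj (Setoid.comap (restFin U) σ) =
          Setoid.comap (restFin U) (Setoid.comap s σ) := by
        rw [comap_comap, comap_comap, hcr]
        exact Setoid.ext fun x y => Iff.rfl
      have e3 : (Z₁ ∘ restFin U) ∘ sj = (Z₁ ∘ s) ∘ restFin U := by
        funext i
        show Z₁ (restFin U (sj i)) = Z₁ (s (restFin U i))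
        exact congrArg Z₁ (congrFun hcr i)
      rw [e1, e2, e3]
    · -- not both endpoints in U : the two sides agree literally
      have hcd : (U.image s).card = U.card := card_image_swap U
      have hrel : restFin (U.image ⇑s) = ⇑s ∘ restFin U ∘ Fin.cast hcd :=
        restFin_image_swap hab U hpair
      have hptw : ∀ i, s (restFin (U.image ⇑s) i) = restFin U (Fin.cast hcd i) := by
        intro i
        rw [hrel]
        show s (s (restFin U (Fin.cast hcd i))) = _
        rw [hss]
      have e1 : (χ ∘ s) ∘ restFin (U.image s) = (χ ∘ restFin U) ∘ Fin.cast hcd := by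
        funext i
        show χ (s (restFin (U.image ⇑s) i)) = χ (restFin U (Fin.cast hcd i))
        rw [hptw]
      have e2 : Setoid.comap (restFin (U.image s)) (Setoid.comap s σ) =
          Setoid.comap (Fin.cast hcd) (Setoid.comap (restFin U) σ) := by
        rw [comap_comap, comap_comap]
        apply comap_congr
        funext i
        exact hptw i
      have e3 : (Z₁ ∘ s) ∘ restFin (U.image s) = (Z₁ ∘ restFin U) ∘ Fin.cast hcd := by
        funext i
        show Z₁ (s (restFin (U.image ⇑s) i)) = Z₁ (restFin U (Fin.cast hcd i))
        rw [hptw]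
      rw [e1, e2, e3]
      exact Eb_cast Eb hcd _ _ _
  -- main case analysis
  by_cases htop : σ = ⊤
  · subst htop
    rw [comap_top, hTop m χ Z, hTop m (χ ∘ s) (Z ∘ s)]
    obtain ⟨k1, k2⟩ := prod_map_swap_split a b hab Z
    rw [k1, k2]
    exact hc _ _
  · -- σ ≠ ⊤ : find an interval block and reduce
    have hm0 : 0 < m := by have := a.isLt; omega
    have rtrans : ∀ {x y z : Fin m}, σ.r x y → σ.r y z → σ.r x z :=
      fun h1 h2 => σ.iseqv.trans h1 h2
    have rsymm : ∀ {x y : Fin m}, σ.r x y → σ.r y x := fun h => σ.iseqv.symm h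
    obtain ⟨x₀, hVint⟩ := exists_interval_block χ σ hσ hm0
    set V := Finset.univ.filter (fun y => σ.r x₀ y) with hVdef
    have memV : ∀ y, y ∈ V ↔ σ.r x₀ y := fun y => by
      simp only [hVdef, Finset.mem_filter, Finset.mem_univ, true_and]
    have hVb : UnionOfBlocks σ V := fun x hx y hxy =>
      (memV y).mpr (rtrans ((memV x).mp hx) hxy)
    have hWb : UnionOfBlocks σ Vᶜ := by
      intro x hx y hxy
      rw [Finset.mem_compl] at hx ⊢
      intro hyV
      exact hx ((memV x).mpr (rtrans ((memV y).mp hyV) (rsymm hxy)))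
    have hVne : V.Nonempty := ⟨x₀, (memV x₀).mpr (σ.iseqv.refl x₀)⟩
    have hVnu : V ≠ Finset.univ := by
      intro h
      apply htop
      apply Setoid.ext
      intro y z
      constructor
      · intro _; trivial
      · intro _
        exact rtrans (rsymm ((memV y).mp (h ▸ Finset.mem_univ y)))
          ((memV z).mp (h ▸ Finset.mem_univ z))
    have hWne : Vᶜ.Nonempty := by
      rw [Finset.nonempty_iff_ne_empty]
      intro h
      exact hVnu ((Finset.compl_eq_empty_iff V).mp h)
    have hVm : V.card < m := by
      have := Finset.card_lt_card (Finset.ssubset_univ_iff.mpr hVnu)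
      rwa [Finset.card_univ, Fintype.card_fin] at this
    have hWm : Vᶜ.card < m := by
      have hWnu : Vᶜ ≠ Finset.univ := by
        intro h
        rw [Finset.compl_eq_univ_iff] at h
        rw [h] at hVne
        exact Finset.not_nonempty_empty hVne
      have := Finset.card_lt_card (Finset.ssubset_univ_iff.mpr hWnu)
      rwa [Finset.card_univ, Fintype.card_fin] at this
    -- transports to the primed side
    have memI : ∀ (U : Finset (Fin m)) (x : Fin m), x ∈ U.image ⇑s ↔ s x ∈ U :=
      fun U x => mem_image_swap U x
    have blocksI : ∀ (U : Finset (Fin m)), UnionOfBlocks σ U →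
        UnionOfBlocks (Setoid.comap (⇑s) σ) (U.image ⇑s) := by
      intro U hU x hx y hxy
      rw [memI] at hx ⊢
      exact hU (s x) hx (s y) hxy
    have intervalI : ∀ (U : Finset (Fin m)), ChiInterval χ U →
        ChiInterval (χ ∘ ⇑s) (U.image ⇑s) := by
      intro U hU x hx z hz y h1 h2
      rw [memI] at hx hz ⊢
      have l1 : chiRank χ (s x) ≤ chiRank χ (s y) := by
        rcases (chiRank_le_iff (χ ∘ ⇑s) x y).mp h1 with rfl | hlt
        · exact le_rfl
        · exact le_of_lt ((rank2 x y).mp hlt)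
      have l2 : chiRank χ (s y) ≤ chiRank χ (s z) := by
        rcases (chiRank_le_iff (χ ∘ ⇑s) y z).mp h2 with rfl | hlt
        · exact le_rfl
        · exact le_of_lt ((rank2 y z).mp hlt)
      exact hU (s x) hx (s z) hz (s y) l1 l2
    have himgcompl : ∀ (U : Finset (Fin m)), (Uᶜ).image ⇑s = (U.image ⇑s)ᶜ := by
      intro U
      ext x
      rw [memI, Finset.mem_compl, Finset.mem_compl, memI]
    have himgunion : ∀ (U₁ U₂ : Finset (Fin m)), U₁ ∪ U₂ = Finset.univ →
        (U₁.image ⇑s) ∪ (U₂.image ⇑s) = Finset.univ := by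
      intro U₁ U₂ h
      ext x
      simp only [Finset.mem_union, memI, Finset.mem_univ, iff_true]
      have := Finset.mem_univ (s x)
      rw [← h, Finset.mem_union] at this
      exact this
    have himgdisj : ∀ (U₁ U₂ : Finset (Fin m)), Disjoint U₁ U₂ →
        Disjoint (U₁.image ⇑s) (U₂.image ⇑s) := by
      intro U₁ U₂ h
      rw [Finset.disjoint_left] at h ⊢
      intro x hx hx2
      rw [memI] at hx hx2
      exact h hx hx2
    -- the two-interval factorisation case
    have facCase : ∀ (U₁ U₂ : Finset (Fin m)), U₁ ∪ U₂ = Finset.univ →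
        Disjoint U₁ U₂ → U₁.Nonempty → U₂.Nonempty → U₁.card < m → U₂.card < m →
        UnionOfBlocks σ U₁ → UnionOfBlocks σ U₂ → ChiInterval χ U₁ → ChiInterval χ U₂ →
        (∀ x ∈ U₁, ∀ y ∈ U₂, chiRank χ x < chiRank χ y) →
        Eb m χ σ Z = Eb m (χ ∘ ⇑s) (Setoid.comap (⇑s) σ) (Z ∘ ⇑s) := by
      intro U₁ U₂ huniv hdisj hne1 hne2 hm1 hm2 hb1 hb2 hi1 hi2 hord
      have hcov : ∀ k : Fin m, ∃! i : Fin 2, k ∈ (![U₁, U₂] : Fin 2 → Finset (Fin m)) i := by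
        intro k
        have hk : k ∈ U₁ ∪ U₂ := huniv ▸ Finset.mem_univ k
        rw [Finset.mem_union] at hk
        by_cases hk1 : k ∈ U₁
        · refine ⟨0, by simpa using hk1, ?_⟩
          intro i hi
          fin_cases i
          · rfl
          · exfalso
            simp only [Matrix.cons_val_one, Matrix.head_cons] at hi
            exact (Finset.disjoint_left.mp hdisj) hk1 hi
        · refine ⟨1, by simpa using hk.resolve_left hk1, ?_⟩
          intro i hi
          fin_cases i
          · exfalso
            simp only [Matrix.cons_val_zero] at hi
            exact hk1 hi
          · rfl
      have hcov' : ∀ k : Fin m, ∃! i : Fin 2,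
          k ∈ (![U₁.image ⇑s, U₂.image ⇑s] : Fin 2 → Finset (Fin m)) i := by
        intro k
        obtain ⟨i, hi, hiu⟩ := hcov (s k)
        refine ⟨i, ?_, ?_⟩
        · fin_cases i <;> simp only [Matrix.cons_val_zero, Matrix.cons_val_one,
            Matrix.head_cons, memI, Fin.mk_zero, Fin.mk_one] at hi ⊢ <;> exact hi
        · intro i2 hi2
          apply hiu
          fin_cases i2 <;> simp only [Matrix.cons_val_zero, Matrix.cons_val_one,
            Matrix.head_cons, memI, Fin.mk_zero, Fin.mk_one] at hi2 ⊢ <;> exact hi2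
      have eqL := hFac m χ σ Z hZ hσ 2 ![U₁, U₂] hcov
        (by intro i; fin_cases i <;> simpa)
        (by intro i; fin_cases i <;> simpa)
        (by intro i; fin_cases i <;> simpa)
        (by
          intro i j hij x hx y hy
          fin_cases i <;> fin_cases j <;>
            simp only [Matrix.cons_val_zero, Matrix.cons_val_one, Matrix.head_cons,
              Fin.mk_zero, Fin.mk_one] at hx hy ⊢
          · exact absurd hij (lt_irrefl _)
          · exact hord x hx y hy
          · exact absurd hij (by decide)
          · exact absurd hij (lt_irrefl _))
      have eqR := hFac m (χ ∘ ⇑s) (Setoid.comap (⇑s) σ) (Z ∘ ⇑s) hZ' hσ' 2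
        ![U₁.image ⇑s, U₂.image ⇑s] hcov'
        (by
          intro i
          fin_cases i
          · simpa using Finset.Nonempty.image hne1 ⇑s
          · simpa using Finset.Nonempty.image hne2 ⇑s)
        (by
          intro i; fin_cases i <;> simp only [Matrix.cons_val_zero, Matrix.cons_val_one,
            Matrix.head_cons]
          · exact blocksI U₁ hb1
          · exact blocksI U₂ hb2)
        (by
          intro i; fin_cases i <;> simp only [Matrix.cons_val_zero, Matrix.cons_val_one,
            Matrix.head_cons]
          · exact intervalI U₁ hi1
          · exact intervalI U₂ hi2)
        (by
          intro i j hij x hx y hy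
          fin_cases i <;> fin_cases j <;>
            simp only [Matrix.cons_val_zero, Matrix.cons_val_one, Matrix.head_cons,
              memI, Fin.mk_zero, Fin.mk_one] at hx hy ⊢
          · exact absurd hij (lt_irrefl _)
          · have := hord (s x) hx (s y) hy
            rw [rank2]
            exact this
          · exact absurd hij (by decide)
          · exact absurd hij (lt_irrefl _))
      rw [eqL, eqR]
      have hl2 : List.finRange 2 = [0, 1] := by decide
      rw [hl2]
      simp only [List.map_cons, List.map_nil, List.prod_cons, List.prod_nil, mul_one,
        Matrix.cons_val_zero, Matrix.cons_val_one, Matrix.head_cons]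
      rw [H U₁ hm1 Z hZ hc, H U₂ hm2 Z hZ hc]
    -- case analysis on the position of the interval block
    by_cases hlow : ∀ w ∈ Vᶜ, ∀ v ∈ V, chiRank χ v < chiRank χ w
    · refine facCase V Vᶜ (Finset.union_compl V) disjoint_compl_right hVne hWne hVm hWm
        hVb hWb hVint ?_ (fun x hx y hy => hlow y hy x hx)
      -- Vᶜ is a χ-interval
      intro x hx z hz y h1 h2
      rw [Finset.mem_compl]
      intro hyV
      have := hlow x hx y hyV
      omega
    · by_cases hhigh : ∀ w ∈ Vᶜ, ∀ v ∈ V, chiRank χ w < chiRank χ v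
      · refine facCase Vᶜ V ?_ disjoint_compl_right.symm hWne hVne hWm hVm
          hWb hVb ?_ hVint (fun x hx y hy => hhigh x hx y hy)
        · rw [Finset.union_comm]; exact Finset.union_compl V
        · intro x hx z hz y h1 h2
          rw [Finset.mem_compl]
          intro hyV
          have := hhigh z hz y hyV
          omega
      · -- nesting case
        push_neg at hlow hhigh
        obtain ⟨w₁, hw₁, v₁, hv₁, hnv₁⟩ := hlow
        obtain ⟨w₂, hw₂, v₂, hv₂, hnv₂⟩ := hhigh
        have hwv₁ : chiRank χ w₁ < chiRank χ v₁ := by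
          have hne1 : w₁ ≠ v₁ := by
            intro h; rw [Finset.mem_compl] at hw₁; exact hw₁ (h ▸ hv₁)
          rcases chiRank_lt_or χ hne1 with h | h
          · exact h
          · omega
        have hwv₂ : chiRank χ v₂ < chiRank χ w₂ := by
          have hne2 : v₂ ≠ w₂ := by
            intro h; rw [Finset.mem_compl] at hw₂; exact hw₂ (h ▸ hv₂)
          rcases chiRank_lt_or χ hne2 with h | h
          · exact h
          · omega
        have hbelow : ∀ v ∈ V, chiRank χ w₁ < chiRank χ v := by
          intro v hv
          by_contra hcon
          have hnev : v ≠ w₁ := by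
            intro h; rw [Finset.mem_compl] at hw₁; exact hw₁ (h ▸ hv)
          have h1 : chiRank χ v < chiRank χ w₁ := by
            rcases chiRank_lt_or χ hnev with h | h
            · exact h
            · omega
          have := hVint v hv v₁ hv₁ w₁ (le_of_lt h1) (le_of_lt hwv₁)
          rw [Finset.mem_compl] at hw₁
          exact hw₁ this
        have habove : ∀ v ∈ V, chiRank χ v < chiRank χ w₂ := by
          intro v hv
          by_contra hcon
          have hnev : w₂ ≠ v := by
            intro h; rw [Finset.mem_compl] at hw₂; exact hw₂ (h ▸ hv)
          have h1 : chiRank χ w₂ < chiRank χ v := by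
            rcases chiRank_lt_or χ hnev with h | h
            · exact h
            · omega
          have := hVint v₂ hv₂ v hv w₂ (le_of_lt hwv₂) (le_of_lt h1)
          rw [Finset.mem_compl] at hw₂
          exact hw₂ this
        obtain ⟨p, hpS, hpmax⟩ := Finset.exists_max_image
          (Vᶜ.filter (fun u => ∀ v ∈ V, chiRank χ u < chiRank χ v)) (chiRank χ)
          ⟨w₁, Finset.mem_filter.mpr ⟨hw₁, hbelow⟩⟩
        rw [Finset.mem_filter] at hpS
        obtain ⟨hpW, hpv⟩ := hpS
        have hpbig : ∀ w ∈ Vᶜ, (∀ v ∈ V, chiRank χ w < chiRank χ v) →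
            chiRank χ w ≤ chiRank χ p := by
          intro w hw hcond
          exact hpmax w (Finset.mem_filter.mpr ⟨hw, hcond⟩)
        have eqL := hNest m χ σ Z hZ hσ V Vᶜ hVne hWne disjoint_compl_right
          (Finset.union_compl V) hVb hWb hVint ⟨w₂, hw₂, habove⟩ p hpW hpv hpbig
        have eqR := hNest m (χ ∘ ⇑s) (Setoid.comap (⇑s) σ) (Z ∘ ⇑s) hZ' hσ'
          (V.image ⇑s) (Vᶜ.image ⇑s)
          (Finset.Nonempty.image hVne _) (Finset.Nonempty.image hWne _)
          (himgdisj V Vᶜ disjoint_compl_right)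
          (himgunion V Vᶜ (Finset.union_compl V))
          (blocksI V hVb) (blocksI Vᶜ hWb) (intervalI V hVint)
          (by
            refine ⟨s w₂, ?_, ?_⟩
            · rw [memI, hss]; exact hw₂
            · intro v' hv'
              rw [memI] at hv'
              rw [rank2, hss]
              exact habove (s v') hv')
          (s p)
          (by rw [memI, hss]; exact hpW)
          (by
            intro v' hv'
            rw [memI] at hv'
            rw [rank2, hss]
            exact hpv (s v') hv')
          (by
            intro w' hw' hcond
            rw [memI] at hw'
            have hcond2 : ∀ v ∈ V, chiRank χ (s w') < chiRank χ v := by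
              intro v hv
              have := hcond (s v) (by rw [memI, hss]; exact hv)
              rw [rank2, hss] at this
              exact this
            have hle := hpbig (s w') hw' hcond2
            rcases (chiRank_le_iff χ (s w') p).mp hle with heq | hlt
            · rw [← heq, hss]
            · apply le_of_lt
              rw [rank2, hss]
              exact hlt)
        rw [eqL, eqR]
        set b₀ := Eb V.card (χ ∘ restFin V) (Setoid.comap (restFin V) σ) (Z ∘ restFin V)
          with hb₀
        have hb : Eb (V.image ⇑s).card ((χ ∘ ⇑s) ∘ restFin (V.image ⇑s))
            (Setoid.comap (restFin (V.image ⇑s)) (Setoid.comap (⇑s) σ))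
            ((Z ∘ ⇑s) ∘ restFin (V.image ⇑s)) = b₀ := H V hVm Z hZ hc
        have hcp : (χ ∘ ⇑s) (s p) = χ p := congrArg χ (hss p)
        have hzp : (Z ∘ ⇑s) (s p) = Z p := congrArg Z (hss p)
        rw [hb, hcp, hzp]
        set c : P.A := if χ p = true then Z p * P.L b₀
          else P.R (MulOpposite.op b₀) * Z p with hcdef
        have hupd : Function.update (Z ∘ ⇑s) (s p) c = (Function.update Z p c) ∘ ⇑s := by
          funext x
          show Function.update (Z ∘ ⇑s) (s p) c x = Function.update Z p c (s x)
          rw [Function.update_apply, Function.update_apply]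
          by_cases hx : x = s p
          · rw [if_pos hx, if_pos (by rw [hx, hss])]
          · rw [if_neg hx, if_neg (fun h => hx (by rw [← h, hss]))]
            rfl
        rw [hupd]
        -- SideOK for the updated tuple
        have hZc : SideOK P χ (Function.update Z p c) := by
          intro k
          by_cases hk : k = p
          · subst hk
            rw [Function.update_self]
            constructor
            · intro hkt bb
              rw [hcdef, if_pos hkt]
              calc Z k * P.L b₀ * P.R (MulOpposite.op bb)
                  = Z k * (P.L b₀ * P.R (MulOpposite.op bb)) := mul_assoc _ _ _
                _ = Z k * (P.R (MulOpposite.op bb) * P.L b₀) := by rw [P.comm]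
                _ = Z k * P.R (MulOpposite.op bb) * P.L b₀ := (mul_assoc _ _ _).symm
                _ = P.R (MulOpposite.op bb) * Z k * P.L b₀ := by rw [(hZ k).1 hkt bb]
                _ = P.R (MulOpposite.op bb) * (Z k * P.L b₀) := mul_assoc _ _ _
            · intro hkf bb
              rw [hcdef, if_neg (by rw [hkf]; simp)]
              calc P.R (MulOpposite.op b₀) * Z k * P.L bb
                  = P.R (MulOpposite.op b₀) * (Z k * P.L bb) := mul_assoc _ _ _
                _ = P.R (MulOpposite.op b₀) * (P.L bb * Z k) := by rw [(hZ k).2 hkf bb]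
                _ = P.R (MulOpposite.op b₀) * P.L bb * Z k := (mul_assoc _ _ _).symm
                _ = P.L bb * P.R (MulOpposite.op b₀) * Z k := by rw [P.comm]
                _ = P.L bb * (P.R (MulOpposite.op b₀) * Z k) := mul_assoc _ _ _
          · rw [Function.update_of_ne hk]
            exact hZ k
        -- the commutation hypothesis for the updated tuple
        have hcc : ∀ Zl Zr, P.E (Zl * Function.update Z p c a * Function.update Z p c b * Zr)
            = P.E (Zl * Function.update Z p c b * Function.update Z p c a * Zr) := by
          intro Zl Zr
          by_cases hpa : p = a
          · subst hpa
            rw [Function.update_self, Function.update_of_ne (Ne.symm hab')]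
            rw [hcdef, if_pos hχa]
            have hbl : Z b * P.L b₀ = P.L b₀ * Z b := (hZ b).2 hχb b₀
            have key : P.L b₀ * (Z b * Zr) = Z b * (P.L b₀ * Zr) := by
              rw [← mul_assoc, ← hbl, mul_assoc]
            have h1 : Zl * (Z p * P.L b₀) * Z b * Zr = Zl * Z p * Z b * (P.L b₀ * Zr) := by
              simp only [mul_assoc]
              rw [key]
            have h2 : Zl * Z b * (Z p * P.L b₀) * Zr = Zl * Z b * Z p * (P.L b₀ * Zr) := by
              simp only [mul_assoc]
            rw [h1, h2]
            exact hc Zl (P.L b₀ * Zr)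
          · by_cases hpb : p = b
            · subst hpb
              rw [Function.update_self, Function.update_of_ne hab']
              rw [hcdef, if_neg (by rw [hχb]; simp)]
              have har : Z a * P.R (MulOpposite.op b₀) = P.R (MulOpposite.op b₀) * Z a :=
                (hZ a).1 hχa b₀
              have key : Z a * (P.R (MulOpposite.op b₀) * (Z p * Zr)) =
                  P.R (MulOpposite.op b₀) * (Z a * (Z p * Zr)) := by
                rw [← mul_assoc, har, mul_assoc]
              have h1 : Zl * Z a * (P.R (MulOpposite.op b₀) * Z p) * Zr =
                  Zl * P.R (MulOpposite.op b₀) * Z a * Z p * Zr := by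
                simp only [mul_assoc]
                rw [key]
              have h2 : Zl * (P.R (MulOpposite.op b₀) * Z p) * Z a * Zr =
                  Zl * P.R (MulOpposite.op b₀) * Z p * Z a * Zr := by
                simp only [mul_assoc]
              rw [h1, h2]
              exact hc (Zl * P.R (MulOpposite.op b₀)) Zr
            · rw [Function.update_of_ne (fun h => hpa h.symm),
                Function.update_of_ne (fun h => hpb h.symm)]
              exact hc Zl Zr
        exact (H Vᶜ hWm (Function.update Z p c) hZc hcc).symm

end LemC

section LemB

lemma isBNC_top {m : ℕ} (χ : Fin m → Bool) : IsBNC χ (⊤ : Setoid (Fin m)) :=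
  fun _ _ _ _ _ _ _ _ _ => trivial

lemma comap_swap_inj {m : ℕ} {a b : Fin m} {π τ : Setoid (Fin m)}
    (h : Setoid.comap (Equiv.swap a b) π = Setoid.comap (Equiv.swap a b) τ) : π = τ := by
  have := congrArg (Setoid.comap (Equiv.swap a b)) h
  rwa [comap_swap_swap, comap_swap_swap] at this

lemma comap_swap_le_iff {m : ℕ} {a b : Fin m} {π τ : Setoid (Fin m)} :
    Setoid.comap (Equiv.swap a b) π ≤ Setoid.comap (Equiv.swap a b) τ ↔ π ≤ τ := by
  constructor
  · intro h x y hxy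
    have hx : (Setoid.comap (Equiv.swap a b) π).r (Equiv.swap a b x) (Equiv.swap a b y) := by
      show π.r (Equiv.swap a b (Equiv.swap a b x)) (Equiv.swap a b (Equiv.swap a b y))
      rw [Equiv.swap_apply_self, Equiv.swap_apply_self]
      exact hxy
    have h2 : τ.r (Equiv.swap a b (Equiv.swap a b x)) (Equiv.swap a b (Equiv.swap a b y)) :=
      h hx
    rwa [Equiv.swap_apply_self, Equiv.swap_apply_self] at h2
  · intro h x y hxy
    exact h hxy

lemma comap_swap_top_iff {m : ℕ} {a b : Fin m} {π : Setoid (Fin m)} :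
    Setoid.comap (Equiv.swap a b) π = ⊤ ↔ π = ⊤ := by
  constructor
  · intro h
    apply comap_swap_inj (a := a) (b := b)
    rw [h, comap_top]
  · intro h
    rw [h, comap_top]

lemma isBNC_comap_swap_iff {m : ℕ} {a b : Fin m} (hab : (a : ℕ) + 1 = b)
    {χ : Fin m → Bool} (hne : χ a ≠ χ b) {σ : Setoid (Fin m)} :
    IsBNC (χ ∘ Equiv.swap a b) (Setoid.comap (Equiv.swap a b) σ) ↔ IsBNC χ σ := by
  constructor
  · intro h
    have hne' : (χ ∘ Equiv.swap a b) a ≠ (χ ∘ Equiv.swap a b) b := by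
      simp only [Function.comp_apply, Equiv.swap_apply_left, Equiv.swap_apply_right]
      exact hne.symm
    have := isBNC_comap_swap hab hne' h
    have e1 : (χ ∘ Equiv.swap a b) ∘ Equiv.swap a b = χ := by
      funext x
      show χ (Equiv.swap a b (Equiv.swap a b x)) = χ x
      rw [Equiv.swap_apply_self]
    rwa [e1, comap_swap_swap] at this
  · exact isBNC_comap_swap hab hne

lemma lemB (μ : (n : ℕ) → (Fin n → Bool) → Setoid (Fin n) → Setoid (Fin n) → ℂ)
    (hμ : MoebiusBNC μ) (m : ℕ) (a b : Fin m) (hab : (a : ℕ) + 1 = b)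
    (χ : Fin m → Bool) (hne : χ a ≠ χ b) :
    ∀ π : Setoid (Fin m), IsBNC χ π →
      μ m χ π ⊤ = μ m (χ ∘ Equiv.swap a b) (Setoid.comap (Equiv.swap a b) π) ⊤ := by
  classical
  set s := Equiv.swap a b with hs
  -- the recursion step
  have step : ∀ π : Setoid (Fin m), IsBNC χ π →
      (∀ τ : Setoid (Fin m), IsBNC χ τ → π < τ →
        μ m χ τ ⊤ = μ m (χ ∘ s) (Setoid.comap s τ) ⊤) →
      μ m χ π ⊤ = μ m (χ ∘ s) (Setoid.comap s π) ⊤ := by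
    intro π hπ hrec
    set S : Set (Setoid (Fin m)) := {τ | IsBNC χ τ ∧ π ≤ τ ∧ τ ≤ ⊤} with hS
    set T : Set (Setoid (Fin m)) := {τ | IsBNC (χ ∘ s) τ ∧ Setoid.comap s π ≤ τ ∧
      τ ≤ ⊤} with hT
    have hrec1 := hμ.2.1 m χ π ⊤ hπ (isBNC_top χ) le_top
    have hrec2 := hμ.2.1 m (χ ∘ s) (Setoid.comap s π) ⊤ (isBNC_comap_swap hab hne hπ)
      (isBNC_top _) le_top
    have hbij : Set.BijOn (Setoid.comap s) S T := by
      refine ⟨?_, ?_, ?_⟩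
      · rintro τ ⟨h1, h2, -⟩
        exact ⟨isBNC_comap_swap hab hne h1, comap_swap_le_iff.mpr h2, le_top⟩
      · intro τ₁ _ τ₂ _ h
        exact comap_swap_inj h
      · rintro τ' ⟨h1, h2, -⟩
        refine ⟨Setoid.comap s τ', ⟨?_, ?_, le_top⟩, comap_swap_swap τ'⟩
        · rw [← isBNC_comap_swap_iff hab hne, comap_swap_swap]
          exact h1
        · rw [← comap_swap_le_iff (a := a) (b := b), comap_swap_swap]
          exact h2
    have hSfin : S.Finite := Set.toFinite S
    set F : Finset (Setoid (Fin m)) := hSfin.toFinset with hF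
    have hmemF : ∀ τ, τ ∈ F ↔ (IsBNC χ τ ∧ π ≤ τ ∧ τ ≤ ⊤) := by
      intro τ
      rw [hF, Set.Finite.mem_toFinset]
      rfl
    have hcoe : (↑F : Set (Setoid (Fin m))) = S := Set.Finite.coe_toFinset hSfin
    have h1 : (∑ τ ∈ F, μ m χ τ ⊤) = if π = ⊤ then 1 else 0 := by
      rw [← finsum_mem_coe_finset, hcoe]
      exact hrec1
    have h2 : (∑ τ ∈ F, μ m (χ ∘ s) (Setoid.comap s τ) ⊤) = if π = ⊤ then 1 else 0 := by
      rw [← finsum_mem_coe_finset, hcoe]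
      have hre : (∑ᶠ τ ∈ S, μ m (χ ∘ ⇑s) (Setoid.comap (⇑s) τ) ⊤) =
          ∑ᶠ τ' ∈ T, μ m (χ ∘ ⇑s) τ' ⊤ :=
        finsum_mem_eq_of_bijOn (Setoid.comap ⇑s) hbij (fun x _ => rfl)
      rw [hre, hrec2]
      by_cases hcase : π = ⊤
      · rw [if_pos hcase, if_pos (by rw [hcase, comap_top])]
      · rw [if_neg hcase, if_neg (fun h => hcase (comap_swap_top_iff.mp h))]
    have h3 : (∑ τ ∈ F, (μ m χ τ ⊤ - μ m (χ ∘ s) (Setoid.comap s τ) ⊤)) = 0 := by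
      rw [Finset.sum_sub_distrib, h1, h2, sub_self]
    have hπF : π ∈ F := (hmemF π).mpr ⟨hπ, le_refl π, le_top⟩
    have h4 : (∑ τ ∈ F.erase π, (μ m χ τ ⊤ - μ m (χ ∘ s) (Setoid.comap s τ) ⊤)) = 0 := by
      apply Finset.sum_eq_zero
      intro τ hτ
      have hτne : τ ≠ π := Finset.ne_of_mem_erase hτ
      have hτF := (hmemF τ).mp (Finset.mem_of_mem_erase hτ)
      have : π < τ := lt_of_le_of_ne hτF.2.1 (Ne.symm hτne)
      rw [hrec τ hτF.1 this, sub_self]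
    have h5 := Finset.add_sum_erase F
      (fun τ => μ m χ τ ⊤ - μ m (χ ∘ s) (Setoid.comap s τ) ⊤) hπF
    rw [h4, add_zero, h3] at h5
    exact sub_eq_zero.mp h5
  -- strong induction on the number of strictly larger bi-non-crossing partitions
  have main : ∀ K : ℕ, ∀ π : Setoid (Fin m), IsBNC χ π →
      (Set.toFinite {τ : Setoid (Fin m) | IsBNC χ τ ∧ π < τ}).toFinset.card ≤ K →
      μ m χ π ⊤ = μ m (χ ∘ s) (Setoid.comap s π) ⊤ := by
    intro K
    induction K with
    | zero =>
      intro π hπ hcard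
      apply step π hπ
      intro τ hτ hlt
      exfalso
      have : τ ∈ (Set.toFinite {τ : Setoid (Fin m) | IsBNC χ τ ∧ π < τ}).toFinset :=
        (Set.Finite.mem_toFinset _).mpr ⟨hτ, hlt⟩
      have := Finset.card_pos.mpr ⟨τ, this⟩
      omega
    | succ K IHK =>
      intro π hπ hcard
      apply step π hπ
      intro τ hτ hlt
      apply IHK τ hτ
      have hsub : (Set.toFinite {ρ : Setoid (Fin m) | IsBNC χ ρ ∧ τ < ρ}).toFinset ⊆
          (Set.toFinite {ρ : Setoid (Fin m) | IsBNC χ ρ ∧ π < ρ}).toFinset := by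
        intro ρ hρ
        rw [Set.Finite.mem_toFinset] at hρ ⊢
        exact ⟨hρ.1, lt_trans hlt hρ.2⟩
      have hmem : τ ∈ (Set.toFinite {ρ : Setoid (Fin m) | IsBNC χ ρ ∧ π < ρ}).toFinset :=
        (Set.Finite.mem_toFinset _).mpr ⟨hτ, hlt⟩
      have hnotmem : τ ∉ (Set.toFinite {ρ : Setoid (Fin m) | IsBNC χ ρ ∧ τ < ρ}).toFinset := by
        rw [Set.Finite.mem_toFinset]
        rintro ⟨-, h⟩
        exact lt_irrefl τ h
      have hss := (Finset.ssubset_iff_of_subset hsub).mpr ⟨τ, hmem, hnotmem⟩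
      have := Finset.card_lt_card hss
      omega
  intro π hπ
  exact main _ π hπ le_rfl

end LemB

section Main

variable {B : Type} [Ring B] [Algebra ℂ B]

lemma stmt17core (P : BBNCPS B)
    (Eb : (n : ℕ) → (Fin n → Bool) → Setoid (Fin n) → (Fin n → P.A) → B)
    (μ : (n : ℕ) → (Fin n → Bool) → Setoid (Fin n) → Setoid (Fin n) → ℂ)
    (hTop : AnchorsTop P Eb) (hFac : FactorsOverIntervals P Eb)
    (hNest : NestsOverIntervals P Eb) (hμ : MoebiusBNC μ)
    (n : ℕ) (a b : Fin n) (hab : (a : ℕ) + 1 = b) (χ : Fin n → Bool)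
    (hχa : χ a = true) (hχb : χ b = false) (Z₁ : Fin n → P.A)
    (hZ₁ : SideOK P χ Z₁)
    (hc₁ : ∀ Zl Zr, P.E (Zl * Z₁ a * Z₁ b * Zr) = P.E (Zl * Z₁ b * Z₁ a * Zr)) :
    (∑ᶠ σ ∈ {σ : Setoid (Fin n) | IsBNC χ σ}, μ n χ σ ⊤ • Eb n χ σ Z₁) =
      ∑ᶠ σ ∈ {σ : Setoid (Fin n) | IsBNC (χ ∘ Equiv.swap a b) σ},
        μ n (χ ∘ Equiv.swap a b) σ ⊤ •
          Eb n (χ ∘ Equiv.swap a b) σ (Z₁ ∘ Equiv.swap a b) := by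
  have hne : χ a ≠ χ b := by rw [hχa, hχb]; simp
  have hbij : Set.BijOn (Setoid.comap ⇑(Equiv.swap a b))
      {σ : Setoid (Fin n) | IsBNC χ σ}
      {σ : Setoid (Fin n) | IsBNC (χ ∘ Equiv.swap a b) σ} := by
    refine ⟨?_, ?_, ?_⟩
    · intro σ hσ
      exact isBNC_comap_swap hab hne hσ
    · intro σ₁ _ σ₂ _ h
      exact comap_swap_inj h
    · intro τ' h1
      refine ⟨Setoid.comap (⇑(Equiv.swap a b)) τ', ?_, comap_swap_swap τ'⟩
      apply (isBNC_comap_swap_iff hab hne).mp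
      rwa [comap_swap_swap]
  refine finsum_mem_eq_of_bijOn _ hbij ?_
  intro σ hσ
  rw [lemB μ hμ n a b hab χ hne σ hσ,
    lemC P Eb hTop hFac hNest n a b hab χ hχa hχb σ hσ Z₁ hZ₁ hc₁]

end Main

/-- Let `(A, E, ε)` be a `B`-`B`-non-commutative probability space,
`χ : {1,…,n} → {ℓ,r}`, and suppose `X ∈ A_ℓ`, `Y ∈ A_r` satisfy
`E(Z X Y Z') = E(Z Y X Z')` for all `Z, Z' ∈ A`.  If `χ(k₀) = ℓ` and `χ(k₀+1) = r`, and
`χ'` is obtained from `χ` by swapping the values at `k₀` and `k₀+1`, then the bi-free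
cumulants satisfy
`κ^B_χ(Z₁,…,Z_{k₀−1}, X, Y, Z_{k₀+2},…,Z_n) = κ^B_{χ'}(Z₁,…,Z_{k₀−1}, Y, X, Z_{k₀+2},…,Z_n)`
for all `Z_k ∈ A_{χ(k)}` (`k ≠ k₀, k₀+1`).

Here `κ^B_χ(Z) = Σ_{σ ∈ BNC(χ)} μ_BNC(σ, 1_χ) E^B_σ(Z)`, with `E^B` the bi-multiplicative
moment function (hypothesized via its characterizing properties) and `μ` the
bi-non-crossing Möbius function. -/
theorem stmt17 (P : BBNCPS B)
    (Eb : (n : ℕ) → (Fin n → Bool) → Setoid (Fin n) → (Fin n → P.A) → B)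
    (μ : (n : ℕ) → (Fin n → Bool) → Setoid (Fin n) → Setoid (Fin n) → ℂ)
    (hTop : AnchorsTop P Eb) (hFac : FactorsOverIntervals P Eb)
    (hNest : NestsOverIntervals P Eb) (hμ : MoebiusBNC μ)
    (n : ℕ) (k₀ : ℕ) (hk : k₀ + 1 < n) (χ : Fin n → Bool)
    (hχ₀ : χ ⟨k₀, by omega⟩ = true) (hχ₁ : χ ⟨k₀ + 1, hk⟩ = false)
    (X Y : P.A)
    (hX : ∀ b : B, X * P.R (MulOpposite.op b) = P.R (MulOpposite.op b) * X)
    (hY : ∀ b : B, Y * P.L b = P.L b * Y)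
    (hcomm : ∀ Zl Zr : P.A, P.E (Zl * X * Y * Zr) = P.E (Zl * Y * X * Zr))
    (Z : Fin n → P.A)
    (hZ : ∀ k : Fin n, (k : ℕ) ≠ k₀ → (k : ℕ) ≠ k₀ + 1 →
      (χ k = true →
        ∀ b : B, Z k * P.R (MulOpposite.op b) = P.R (MulOpposite.op b) * Z k) ∧
      (χ k = false → ∀ b : B, Z k * P.L b = P.L b * Z k)) :
    (∑ᶠ σ ∈ {σ : Setoid (Fin n) | IsBNC χ σ},
        μ n χ σ ⊤ • Eb n χ σ (fun k =>
          if (k : ℕ) = k₀ then X else if (k : ℕ) = k₀ + 1 then Y else Z k))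
      =
    (∑ᶠ σ ∈ {σ : Setoid (Fin n) |
          IsBNC (fun k => if (k : ℕ) = k₀ then false
            else if (k : ℕ) = k₀ + 1 then true else χ k) σ},
        μ n (fun k => if (k : ℕ) = k₀ then false
            else if (k : ℕ) = k₀ + 1 then true else χ k) σ ⊤ •
          Eb n (fun k => if (k : ℕ) = k₀ then false
            else if (k : ℕ) = k₀ + 1 then true else χ k) σ
            (fun k => if (k : ℕ) = k₀ then Y else if (k : ℕ) = k₀ + 1 then X else Z k)) := by
  set a : Fin n := ⟨k₀, by omega⟩ with hadef
  set b : Fin n := ⟨k₀ + 1, hk⟩ with hbdef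
  have hav : (a : ℕ) = k₀ := rfl
  have hbv : (b : ℕ) = k₀ + 1 := rfl
  have hab : (a : ℕ) + 1 = (b : ℕ) := rfl
  have hχa : χ a = true := hχ₀
  have hχb : χ b = false := hχ₁
  have hsval : ∀ k : Fin n, (k : ℕ) ≠ k₀ → (k : ℕ) ≠ k₀ + 1 → Equiv.swap a b k = k := by
    intro k h1 h2
    apply Equiv.swap_apply_of_ne_of_ne
    · exact fun h => h1 (by rw [h, hav])
    · exact fun h => h2 (by rw [h, hbv])
  set Z₁ : Fin n → P.A := fun k =>
    if (k : ℕ) = k₀ then X else if (k : ℕ) = k₀ + 1 then Y else Z k with hZ₁def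
  have hχ'eq : (fun k : Fin n => if (k : ℕ) = k₀ then false
      else if (k : ℕ) = k₀ + 1 then true else χ k) = χ ∘ ⇑(Equiv.swap a b) := by
    funext k
    by_cases h1 : (k : ℕ) = k₀
    · have hk' : k = a := Fin.ext (by rw [h1, hav])
      rw [if_pos h1, hk']
      show _ = χ (Equiv.swap a b a)
      rw [Equiv.swap_apply_left, hχb]
    · by_cases h2 : (k : ℕ) = k₀ + 1
      · have hk' : k = b := Fin.ext (by rw [h2, hbv])
        rw [if_neg h1, if_pos h2, hk']
        show _ = χ (Equiv.swap a b b)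
        rw [Equiv.swap_apply_right, hχa]
      · rw [if_neg h1, if_neg h2]
        show χ k = χ (Equiv.swap a b k)
        rw [hsval k h1 h2]
  have hW'eq : (fun k : Fin n => if (k : ℕ) = k₀ then Y
      else if (k : ℕ) = k₀ + 1 then X else Z k) = Z₁ ∘ ⇑(Equiv.swap a b) := by
    funext k
    by_cases h1 : (k : ℕ) = k₀
    · have hk' : k = a := Fin.ext (by rw [h1, hav])
      rw [if_pos h1, hk']
      show Y = Z₁ (Equiv.swap a b a)
      rw [Equiv.swap_apply_left]
      simp only [hZ₁def]
      simp [hbv]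
    · by_cases h2 : (k : ℕ) = k₀ + 1
      · have hk' : k = b := Fin.ext (by rw [h2, hbv])
        rw [if_neg h1, if_pos h2, hk']
        show X = Z₁ (Equiv.swap a b b)
        rw [Equiv.swap_apply_right]
        simp only [hZ₁def]
        simp [hav]
      · rw [if_neg h1, if_neg h2]
        show Z k = Z₁ (Equiv.swap a b k)
        rw [hsval k h1 h2]
        simp only [hZ₁def]
        rw [if_neg h1, if_neg h2]
  have hZ₁ok : SideOK P χ Z₁ := by
    intro k
    by_cases h1 : (k : ℕ) = k₀
    · have hk' : k = a := Fin.ext (by rw [h1, hav])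
      have hv : Z₁ k = X := by simp only [hZ₁def]; rw [if_pos h1]
      constructor
      · intro _ bb
        rw [hv]
        exact hX bb
      · intro hkf
        exfalso
        rw [hk', hχa] at hkf
        simp at hkf
    · by_cases h2 : (k : ℕ) = k₀ + 1
      · have hk' : k = b := Fin.ext (by rw [h2, hbv])
        have hv : Z₁ k = Y := by simp only [hZ₁def]; rw [if_neg h1, if_pos h2]
        constructor
        · intro hkt
          exfalso
          rw [hk', hχb] at hkt
          simp at hkt
        · intro _ bb
          rw [hv]
          exact hY bb
      · have hv : Z₁ k = Z k := by simp only [hZ₁def]; rw [if_neg h1, if_neg h2]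
        constructor
        · intro h bb
          rw [hv]
          exact (hZ k h1 h2).1 h bb
        · intro h bb
          rw [hv]
          exact (hZ k h1 h2).2 h bb
  have hc₁ : ∀ Zl Zr, P.E (Zl * Z₁ a * Z₁ b * Zr) = P.E (Zl * Z₁ b * Z₁ a * Zr) := by
    have ea : Z₁ a = X := by simp only [hZ₁def]; simp [hav]
    have eb : Z₁ b = Y := by simp only [hZ₁def]; simp [hbv]
    intro Zl Zr
    rw [ea, eb]
    exact hcomm Zl Zr
  rw [hχ'eq, hW'eq]
  exact stmt17core P Eb μ hTop hFac hNest hμ n a b hab χ hχa hχb Z₁ hZ₁ok hc₁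

end
end
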